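/- arXiv:1610.05723 — 5 statements merged into one kernel-verified Lean document; each statement's English description precedes it below -/
import Mathlib

section
/- Let σ be a finite type of variables and R a commutative ring. In the ring of formal power series in t over MvPolynomial σ R, set H = Σ_{k≥0} h_k t^k and P = Σ_{k≥1} p_k t^k. Then t·(dH/dt) = P·H; equivalently, for every n ≥ 1 one has n • h_n = Σ_{i=1}^{n} p_i · h_{n−i}. -/
open PowerSeries MvPolynomial Finset

section Aux

variable (σ R : Type*) [Fintype σ] [DecidableEq σ] [CommRing R]

private lemma count_sum_step (j : σ) (n : ℕ) :
    ∑ s : Sym σ (n + 1),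
        (s.1.count j) • (s.1.map (MvPolynomial.X (R := R))).prod
      = MvPolynomial.X j * hsymm σ R n
          + MvPolynomial.X j
            * ∑ t : Sym σ n, (t.1.count j) • (t.1.map (MvPolynomial.X (R := R))).prod := by
  classical
  have step1 : ∑ s : Sym σ (n + 1),
        (s.1.count j) • (s.1.map (MvPolynomial.X (R := R))).prod
      = ∑ t : Sym σ n,
          (t.1.count j + 1) • (MvPolynomial.X j * (t.1.map (MvPolynomial.X (R := R))).prod) := by
    rw [← Finset.sum_filter_of_ne (p := fun s : Sym σ (n+1) => j ∈ s)
      (by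
        intro s _ h
        by_contra hm
        exact h (by rw [Multiset.count_eq_zero_of_notMem (by simpa [Sym.mem_coe] using hm),
          zero_smul]))]
    refine Finset.sum_bij' (i := fun (s : Sym σ (n+1)) (hs : s ∈ Finset.univ.filter (j ∈ ·)) =>
        s.erase j (by simpa using hs))
      (j := fun (t : Sym σ n) _ => j ::ₛ t)
      (hi := fun s hs => Finset.mem_univ _)
      (hj := fun t ht => by simp [Sym.mem_cons_self])
      (left_neg := fun s hs => Sym.cons_erase _)
      (right_neg := fun t ht => Sym.erase_cons_head t j) ?_
    intro s hs
    have hm : j ∈ s.1 := by simpa [Sym.mem_coe] using (Finset.mem_filter.mp hs).2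
    conv_lhs => rw [← Multiset.cons_erase hm]
    simp [Multiset.count_cons_self, Sym.erase]
  rw [step1, hsymm, Finset.mul_sum, Finset.mul_sum, ← Finset.sum_add_distrib]
  refine Finset.sum_congr rfl fun t _ => ?_
  rw [succ_nsmul, mul_smul_comm, add_comm]

private lemma var_sum (j : σ) (n : ℕ) :
    ∑ i ∈ Finset.range n, MvPolynomial.X j ^ (i + 1) * hsymm σ R (n - (i + 1))
      = ∑ s : Sym σ n, (s.1.count j) • (s.1.map (MvPolynomial.X (R := R))).prod := by
  classical
  induction n with
  | zero => simp [Sym.eq_nil_of_card_zero]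
  | succ n ih =>
    rw [Finset.sum_range_succ']
    simp only [Nat.succ_sub_succ]
    have : ∀ i ∈ Finset.range n, MvPolynomial.X j ^ (i + 1 + 1) * hsymm σ R (n - (i + 1))
        = MvPolynomial.X j * (MvPolynomial.X j ^ (i + 1) * hsymm σ R (n - (i + 1))) := by
      intro i _; ring
    rw [Finset.sum_congr rfl this, ← Finset.mul_sum, ih, count_sum_step]
    simp [add_comm]

private lemma master (n : ℕ) :
    ∑ i ∈ Finset.range n, psum σ R (i + 1) * hsymm σ R (n - (i + 1))
      = n • hsymm σ R n := by
  classical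
  have h1 : ∀ i ∈ Finset.range n, psum σ R (i + 1) * hsymm σ R (n - (i + 1))
      = ∑ j : σ, MvPolynomial.X j ^ (i + 1) * hsymm σ R (n - (i + 1)) := by
    intro i _
    rw [psum, Finset.sum_mul]
  rw [Finset.sum_congr rfl h1, Finset.sum_comm,
    Finset.sum_congr rfl fun j (_ : j ∈ Finset.univ) => var_sum σ R j n,
    Finset.sum_comm, hsymm, Finset.smul_sum]
  refine Finset.sum_congr rfl fun s _ => ?_
  rw [← Finset.sum_smul]
  congr 1
  have : ∑ j : σ, s.1.count j = Multiset.card s.1 := by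
    rw [← Multiset.toFinset_sum_count_eq s.1]
    refine (Finset.sum_subset (Finset.subset_univ _) ?_).symm
    intro x _ hx
    exact Multiset.count_eq_zero_of_notMem (by simpa using hx)
  rw [this, s.2]

end Aux

/-- With `H = Σ_{k≥0} h_k t^k` and `P = Σ_{k≥1} p_k t^k` in
`(MvPolynomial σ R)⟦t⟧`, one has `t·(dH/dt) = P·H`; equivalently, for every `n ≥ 1`,
`n • h_n = Σ_{i=1}^n p_i · h_{n-i}`. -/
theorem stmt0 (σ R : Type*) [Fintype σ] [DecidableEq σ] [CommRing R] :
    (PowerSeries.X * PowerSeries.derivative (MvPolynomial σ R) (PowerSeries.mk fun k => hsymm σ R k)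
        = (PowerSeries.mk fun k => if k = 0 then 0 else psum σ R k)
            * PowerSeries.mk fun k => hsymm σ R k)
      ∧ ∀ n : ℕ, 1 ≤ n →
          n • hsymm σ R n = ∑ i ∈ Finset.Icc 1 n, psum σ R i * hsymm σ R (n - i) := by
  classical
  constructor
  · refine PowerSeries.ext fun n => ?_
    rcases n with _ | n
    · simp [PowerSeries.coeff_zero_eq_constantCoeff, map_mul]
    · rw [PowerSeries.coeff_succ_X_mul, PowerSeries.coeff_derivative, PowerSeries.coeff_mk,
        PowerSeries.coeff_mul, Finset.Nat.sum_antidiagonal_eq_sum_range_succ_mk]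
      simp only [PowerSeries.coeff_mk]
      rw [Finset.sum_range_succ']
      simp only [if_pos rfl, zero_mul, add_zero]
      have : ∀ i ∈ Finset.range (n + 1), (if i + 1 = 0 then 0 else psum σ R (i + 1))
          * hsymm σ R (n + 1 - (i + 1)) = psum σ R (i + 1) * hsymm σ R (n + 1 - (i + 1)) := by
      -- i + 1 ≠ 0
        intro i _; simp
      rw [Finset.sum_congr rfl this, master σ R (n + 1), nsmul_eq_mul, mul_comm]
      push_cast
      ring
  · intro n _
    rw [← Finset.Ico_add_one_right_eq_Icc, Finset.sum_Ico_eq_sum_range]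
    simp only [Nat.add_sub_cancel, Nat.succ_sub_one]
    rw [Finset.sum_congr rfl fun i (_ : i ∈ Finset.range n) => by rw [add_comm 1 i],
      master σ R n]
end

section
/- Let σ be a finite type of variables. In the ring of formal power series in t over MvPolynomial σ ℚ, one has Σ_{k≥0} h_k t^k = exp( Σ_{k≥1} (1/k) • p_k t^k ), where exp of a power series with zero constant term is defined by exp(g) = Σ_{n≥0} g^n/n! (each coefficient being a finite sum). -/
open PowerSeries MvPolynomial Finset

/-- The exponential `exp(g) = Σ_{n≥0} g^n/n!` of a formal power series over a `ℚ`-algebra.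
For `g` with zero constant term each coefficient is a finite sum: the coefficient of `t^n`
only receives contributions from `g^m` with `m ≤ n`. -/
noncomputable def expPS {A : Type*} [CommRing A] [Algebra ℚ A] (g : PowerSeries A) :
    PowerSeries A :=
  PowerSeries.mk fun n =>
    ∑ m ∈ Finset.range (n + 1), (m.factorial : ℚ)⁻¹ • PowerSeries.coeff (R := A) n (g ^ m)

section Aux

variable {σ : Type*} [Fintype σ] [DecidableEq σ]

omit [Fintype σ] in
lemma prodX (m : Multiset σ) :
    (m.map (MvPolynomial.X : σ → MvPolynomial σ ℚ)).prod = monomial m.toFinsupp 1 := by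
  induction m using Multiset.induction_on with
  | empty => simp [monomial_zero']
  | cons a s ih =>
      rw [Multiset.map_cons, Multiset.prod_cons, ih, MvPolynomial.X, monomial_mul, one_mul,
        ← Multiset.singleton_add, map_add, Multiset.toFinsupp_singleton]

omit [Fintype σ] in
lemma sum_toFinsupp (m : Multiset σ) :
    ((Multiset.toFinsupp m).sum fun _ e => e) = Multiset.card m := by
  have := Finsupp.card_toMultiset (Multiset.toFinsupp m)
  rw [Multiset.toFinsupp_toMultiset] at this
  exact this.symm

lemma coeff_hsymm (n : ℕ) (d : σ →₀ ℕ) :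
    MvPolynomial.coeff d (hsymm σ ℚ n) = if (d.sum fun _ e => e) = n then 1 else 0 := by
  have key : ∀ s : Sym σ n, MvPolynomial.coeff d (Multiset.map MvPolynomial.X s.1).prod
      = if Multiset.toFinsupp s.1 = d then (1:ℚ) else 0 := fun s => by
    rw [prodX, MvPolynomial.coeff_monomial]
  simp only [hsymm, MvPolynomial.coeff_sum, key]
  by_cases hd : (d.sum fun _ e => e) = n
  · rw [if_pos hd]
    have hcard : Multiset.card d.toMultiset = n := by
      rw [Finsupp.card_toMultiset]; exact hd
    set s₀ : Sym σ n := ⟨d.toMultiset, hcard⟩ with hs₀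
    have hc : ∀ s : Sym σ n, (Multiset.toFinsupp s.1 = d) ↔ s = s₀ := by
      intro s
      constructor
      · intro h
        apply Subtype.ext
        have := congrArg Finsupp.toMultiset h
        rwa [Multiset.toFinsupp_toMultiset] at this
      · intro h
        rw [h, hs₀]
        exact Finsupp.toMultiset_toFinsupp d
    calc (∑ s : Sym σ n, if Multiset.toFinsupp s.1 = d then (1:ℚ) else 0)
        = ∑ s : Sym σ n, if s = s₀ then (1:ℚ) else 0 :=
          Finset.sum_congr rfl fun s _ => if_congr (hc s) rfl rfl
      _ = 1 := by simp
  · rw [if_neg hd]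
    apply Finset.sum_eq_zero
    intro s _
    rw [if_neg]
    intro h
    apply hd
    rw [← h, sum_toFinsupp, s.2]

omit [Fintype σ] in
lemma sub_sum_aux {d : σ →₀ ℕ} {i : σ} {k : ℕ} (h : Finsupp.single i k ≤ d) :
    (d.sum fun _ e => e) = ((d - Finsupp.single i k).sum fun _ e => e) + k := by
  have hd : d = (d - Finsupp.single i k) + Finsupp.single i k := (tsub_add_cancel_of_le h).symm
  conv_lhs => rw [hd]
  rw [Finsupp.sum_add_index' (fun _ => rfl) (fun _ _ _ => rfl), Finsupp.sum_single_index rfl]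

lemma coeff_psum_mul_hsymm (a b : ℕ) (d : σ →₀ ℕ) :
    MvPolynomial.coeff d (psum σ ℚ (a+1) * hsymm σ ℚ b)
      = ∑ i : σ, if Finsupp.single i (a+1) ≤ d then
          (if ((d - Finsupp.single i (a+1)).sum fun _ e => e) = b then (1:ℚ) else 0) else 0 := by
  rw [psum, Finset.sum_mul, MvPolynomial.coeff_sum]
  refine Finset.sum_congr rfl fun i _ => ?_
  rw [X_pow_eq_monomial, coeff_monomial_mul', coeff_hsymm]
  split_ifs <;> simp

lemma count_aux (n m : ℕ) (hm : m ≤ n + 1) :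
    (∑ a ∈ range (n+1), if a + 1 ≤ m then (1:ℚ) else 0) = m := by
  rw [Finset.sum_boole]
  congr 1
  rw [show (range (n+1)).filter (fun a => a + 1 ≤ m) = range m by ext a; simp; omega]
  exact Finset.card_range m

/-- Newton's identity relating complete homogeneous and power sum symmetric polynomials. -/
lemma newton_h (n : ℕ) :
    ((n:ℚ)+1) • hsymm σ ℚ (n+1)
      = ∑ ab ∈ antidiagonal n, psum σ ℚ (ab.1+1) * hsymm σ ℚ ab.2 := by
  apply MvPolynomial.ext
  intro d
  rw [MvPolynomial.coeff_smul, coeff_hsymm, MvPolynomial.coeff_sum]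
  simp only [coeff_psum_mul_hsymm, smul_eq_mul]
  by_cases hd : (d.sum fun _ e => e) = n + 1
  · rw [if_pos hd]
    symm
    have hdle : ∀ i : σ, d i ≤ n + 1 := by
      intro i
      have h1 : Finsupp.single i (d i) ≤ d := Finsupp.single_le_iff.2 le_rfl
      have := sub_sum_aux h1
      omega
    have hstep : ∀ ab ∈ antidiagonal n, ∀ i : σ,
        (if Finsupp.single i (ab.1+1) ≤ d then
          (if ((d - Finsupp.single i (ab.1+1)).sum fun _ e => e) = ab.2 then (1:ℚ) else 0) else 0)
        = if ab.1 + 1 ≤ d i then (1:ℚ) else 0 := by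
      intro ab hab i
      rw [Finset.HasAntidiagonal.mem_antidiagonal] at hab
      by_cases h1 : Finsupp.single i (ab.1+1) ≤ d
      · rw [if_pos h1, if_pos (Finsupp.single_le_iff.1 h1), if_pos]
        have := sub_sum_aux h1
        omega
      · rw [if_neg h1, if_neg (fun hc => h1 (Finsupp.single_le_iff.2 hc))]
    calc (∑ ab ∈ antidiagonal n, ∑ i : σ,
            if Finsupp.single i (ab.1+1) ≤ d then
              (if ((d - Finsupp.single i (ab.1+1)).sum fun _ e => e) = ab.2 then (1:ℚ) else 0) else 0)
        = ∑ ab ∈ antidiagonal n, ∑ i : σ, if ab.1 + 1 ≤ d i then (1:ℚ) else 0 :=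
          Finset.sum_congr rfl fun ab hab =>
            Finset.sum_congr rfl fun i _ => hstep ab hab i
      _ = ∑ a ∈ range (n+1), ∑ i : σ, if a + 1 ≤ d i then (1:ℚ) else 0 := by
          rw [Finset.Nat.sum_antidiagonal_eq_sum_range_succ_mk]
      _ = ∑ i : σ, ∑ a ∈ range (n+1), if a + 1 ≤ d i then (1:ℚ) else 0 := Finset.sum_comm
      _ = ∑ i : σ, (d i : ℚ) := Finset.sum_congr rfl fun i _ => count_aux n (d i) (hdle i)
      _ = ((n:ℚ)+1) * 1 := by
          rw [← Nat.cast_sum]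
          have h2 : (d.sum fun _ e => e) = ∑ i : σ, d i :=
            Finsupp.sum_fintype d (fun _ e => e) fun _ => rfl
          rw [← h2, hd]
          push_cast
          ring
  · rw [if_neg hd, mul_zero]
    refine (Finset.sum_eq_zero fun ab hab => Finset.sum_eq_zero fun i _ => ?_).symm
    rw [Finset.HasAntidiagonal.mem_antidiagonal] at hab
    dsimp only
    split_ifs with h1 h2
    · exfalso
      have := sub_sum_aux h1
      omega
    · rfl
    · rfl

end Aux

section ExpAux

variable {A : Type*} [CommRing A] [Algebra ℚ A]

omit [Algebra ℚ A] in
lemma coeff_pow_zero_lt {g : PowerSeries A} (hg : PowerSeries.constantCoeff (R := A) g = 0)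
    {m k : ℕ} (h : m < k) : PowerSeries.coeff (R := A) m (g ^ k) = 0 := by
  have h1 : (PowerSeries.X : PowerSeries A) ∣ g := X_dvd_iff.2 hg
  exact X_pow_dvd_iff.1 (pow_dvd_pow_of_dvd h1 k) m h

lemma coeff_expPS_of_le {g : PowerSeries A} (hg : PowerSeries.constantCoeff (R := A) g = 0) {n N : ℕ}
    (h : n + 1 ≤ N) :
    PowerSeries.coeff (R := A) n (expPS g)
      = ∑ m ∈ range N, (m.factorial : ℚ)⁻¹ • PowerSeries.coeff (R := A) n (g ^ m) := by
  rw [expPS, coeff_mk]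
  apply Finset.sum_subset (Finset.range_subset_range.2 h)
  intro m hm hnm
  rw [Finset.mem_range] at hnm
  rw [coeff_pow_zero_lt hg (by omega), smul_zero]

lemma fact_succ_inv (m : ℕ) : ((m+1).factorial : ℚ)⁻¹ * ((m:ℚ)+1) = (m.factorial : ℚ)⁻¹ := by
  rw [Nat.factorial_succ, Nat.cast_mul, mul_inv]
  have h : ((m:ℚ)+1) ≠ 0 := by positivity
  field_simp
  norm_cast

/-- The exponential satisfies the differential equation `(exp g)' = g' * exp g`. -/
lemma exp_deriv {g : PowerSeries A} (hg : PowerSeries.constantCoeff (R := A) g = 0) :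
    d⁄dX A (expPS g) = (d⁄dX A g) * expPS g := by
  ext n
  rw [coeff_derivative, coeff_expPS_of_le hg (show (n+1)+1 ≤ n+2 by omega), Finset.sum_mul]
  have hterm : ∀ m ∈ range (n+2),
      ((m.factorial : ℚ)⁻¹ • PowerSeries.coeff (R := A) (n+1) (g ^ m)) * ((n:A)+1)
        = (m.factorial : ℚ)⁻¹ • (m • PowerSeries.coeff (R := A) n (g ^ (m-1) * (d⁄dX A g))) := by
    intro m _
    rw [smul_mul_assoc, ← coeff_derivative]
    congr 1
    rw [Derivation.leibniz_pow, smul_eq_mul, map_nsmul]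
  rw [Finset.sum_congr rfl hterm, Finset.sum_range_succ']
  have h0 : (Nat.factorial 0 : ℚ)⁻¹ •
      ((0:ℕ) • PowerSeries.coeff (R := A) n (g ^ (0-1) * (d⁄dX A g))) = 0 := by
    rw [zero_smul, smul_zero]
  rw [h0, add_zero]
  have hL : ∀ m ∈ range (n+1),
      ((m+1).factorial : ℚ)⁻¹ • ((m+1) • PowerSeries.coeff (R := A) n (g ^ (m+1-1) * (d⁄dX A g)))
        = (m.factorial : ℚ)⁻¹ • PowerSeries.coeff (R := A) n ((d⁄dX A g) * g ^ m) := by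
    intro m _
    rw [← Nat.cast_smul_eq_nsmul ℚ, smul_smul, Nat.add_sub_cancel, mul_comm (g ^ m)]
    push_cast
    rw [fact_succ_inv]
  rw [Finset.sum_congr rfl hL]
  rw [PowerSeries.coeff_mul]
  have hR : ∀ ab ∈ antidiagonal n,
      PowerSeries.coeff (R := A) ab.1 (d⁄dX A g) * PowerSeries.coeff (R := A) ab.2 (expPS g)
        = ∑ m ∈ range (n+1), (m.factorial : ℚ)⁻¹ •
            (PowerSeries.coeff (R := A) ab.1 (d⁄dX A g) * PowerSeries.coeff (R := A) ab.2 (g ^ m)) := by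
    intro ab hab
    rw [Finset.HasAntidiagonal.mem_antidiagonal] at hab
    rw [coeff_expPS_of_le hg (show ab.2 + 1 ≤ n+1 by omega), Finset.mul_sum]
    exact Finset.sum_congr rfl fun m _ => (mul_smul_comm _ _ _)
  rw [Finset.sum_congr rfl hR, Finset.sum_comm]
  refine Finset.sum_congr rfl fun m _ => ?_
  rw [← Finset.smul_sum, PowerSeries.coeff_mul]

end ExpAux

/-- Uniqueness of solutions of the linear ODE `F' = P * F` with given initial condition. -/
lemma ode_unique {A : Type*} [CommRing A] [IsDomain A] [CharZero A] (P : PowerSeries A)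
    {F G : PowerSeries A}
    (h0 : PowerSeries.coeff (R := A) 0 F = PowerSeries.coeff (R := A) 0 G)
    (hF : d⁄dX A F = P * F) (hG : d⁄dX A G = P * G) : F = G := by
  ext n
  induction n using Nat.strong_induction_on with
  | _ n ih =>
    match n with
    | 0 => exact h0
    | Nat.succ n =>
      have e1 := congrArg (PowerSeries.coeff (R := A) n) hF
      have e2 := congrArg (PowerSeries.coeff (R := A) n) hG
      rw [coeff_derivative, PowerSeries.coeff_mul] at e1 e2
      have hsum : (∑ ab ∈ antidiagonal n,
            PowerSeries.coeff (R := A) ab.1 P * PowerSeries.coeff (R := A) ab.2 F)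
          = ∑ ab ∈ antidiagonal n, PowerSeries.coeff (R := A) ab.1 P * PowerSeries.coeff (R := A) ab.2 G := by
        refine Finset.sum_congr rfl fun ab hab => ?_
        rw [Finset.HasAntidiagonal.mem_antidiagonal] at hab
        rw [ih ab.2 (by omega)]
      exact mul_right_cancel₀ (Nat.cast_add_one_ne_zero n) (e1.trans (hsum.trans e2.symm))

/-- Over `MvPolynomial σ ℚ`,
`Σ_{k≥0} h_k t^k = exp( Σ_{k≥1} (1/k) • p_k t^k )`. -/
theorem stmt1 (σ : Type*) [Fintype σ] [DecidableEq σ] :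
    (PowerSeries.mk fun k => hsymm σ ℚ k)
      = expPS (PowerSeries.mk fun k =>
          if k = 0 then 0 else ((k : ℚ)⁻¹ : ℚ) • psum σ ℚ k) := by
  set A := MvPolynomial σ ℚ
  set g : PowerSeries A := PowerSeries.mk fun k =>
    if k = 0 then 0 else ((k : ℚ)⁻¹ : ℚ) • psum σ ℚ k with hgdef
  set P : PowerSeries A := PowerSeries.mk fun a => psum σ ℚ (a+1) with hPdef
  have hcast : ∀ (n : ℕ) (p : A), p * ((n:A)+1) = ((n:ℚ)+1) • p := by
    intro n p
    rw [mul_comm, Algebra.smul_def]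
    congr 1
    simp
  have hg0 : PowerSeries.constantCoeff (R := A) g = 0 := by
    rw [← coeff_zero_eq_constantCoeff, hgdef, coeff_mk]
    simp
  have gD : d⁄dX A g = P := by
    refine PowerSeries.ext fun n => ?_
    rw [coeff_derivative, hgdef, hPdef, coeff_mk, coeff_mk, if_neg (Nat.succ_ne_zero n),
      hcast, smul_smul]
    have h1 : ((n:ℚ)+1) ≠ 0 := by positivity
    rw [show (((n:ℚ)+1) * ((n+1 : ℕ):ℚ)⁻¹) = 1 by push_cast; field_simp, one_smul]
  have hD : d⁄dX A (PowerSeries.mk fun k => hsymm σ ℚ k)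
      = P * PowerSeries.mk fun k => hsymm σ ℚ k := by
    refine PowerSeries.ext fun n => ?_
    rw [coeff_derivative, coeff_mk, hcast, PowerSeries.coeff_mul, newton_h]
    refine Finset.sum_congr rfl fun ab _ => ?_
    rw [hPdef, coeff_mk, coeff_mk]
  have h0 : PowerSeries.coeff (R := A) 0 (PowerSeries.mk fun k => hsymm σ ℚ k)
      = PowerSeries.coeff (R := A) 0 (expPS g) := by
    rw [coeff_mk, expPS, coeff_mk]
    simp [hsymm_zero]
  exact ode_unique P h0 hD (by rw [← gD]; exact exp_deriv hg0)
end

section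
/- Let σ be a finite type of variables. For k ≥ 1 define the Möbius-inverted power sums p'_k := (1/k) Σ_{d ∣ k} μ(k/d) p_d in MvPolynomial σ ℚ, where μ is the Möbius function. Then, in formal power series in t over MvPolynomial σ ℚ, Σ_{k≥0} h_k t^k = Π_{k≥1} (1 − t^k)^{−p'_k}, where (1 − t^k)^{−a} := exp(a · Σ_{m≥1} t^{km}/m) and the infinite product converges coefficientwise (in each degree n only the factors with k ≤ n contribute). -/
open PowerSeries MvPolynomial Finset

/-- The series `Σ_{m≥1} t^{km}/m = -log(1 - t^k)` over a `ℚ`-algebra `A`. -/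
noncomputable def negLogOneSub (A : Type*) [CommRing A] [Algebra ℚ A] (k : ℕ) :
    PowerSeries A :=
  PowerSeries.mk fun j =>
    if k ∣ j ∧ j ≠ 0 then (((j / k : ℕ) : ℚ)⁻¹ : ℚ) • (1 : A) else 0

/-- `(1 - t^k)^{-a} := exp( a · Σ_{m≥1} t^{km}/m )`. -/
noncomputable def onePowNeg {A : Type*} [CommRing A] [Algebra ℚ A] (k : ℕ) (a : A) :
    PowerSeries A :=
  expPS (a • negLogOneSub A k)

/-- The Möbius-inverted power sums `p'_k := (1/k) Σ_{d ∣ k} μ(k/d) p_d` in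
`MvPolynomial σ ℚ`. -/
noncomputable def moebiusPsum (σ : Type*) [Fintype σ] (k : ℕ) : MvPolynomial σ ℚ :=
  ((k : ℚ)⁻¹ : ℚ) • ∑ d ∈ k.divisors,
    (ArithmeticFunction.moebius (k / d) : ℤ) • psum σ ℚ d

section Aux

variable {A : Type*} [CommRing A] [Algebra ℚ A]

@[simp] lemma coeff_expPS (g : PowerSeries A) (n : ℕ) :
    coeff (R := A) n (expPS g) = ∑ m ∈ range (n + 1), (m.factorial : ℚ)⁻¹ • coeff (R := A) n (g ^ m) := by
  simp [expPS]

lemma coeff_pow_eq_zero {g : PowerSeries A} (hg : constantCoeff (R := A) g = 0) {n m : ℕ}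
    (h : n < m) : coeff (R := A) n (g ^ m) = 0 := by
  have : (X : PowerSeries A) ^ m ∣ g ^ m := pow_dvd_pow_of_dvd (X_dvd_iff.mpr hg) m
  rw [X_pow_dvd_iff] at this
  exact this n h

lemma coeff_expPS_congr {f g : PowerSeries A} {n : ℕ}
    (h : ∀ j ≤ n, coeff (R := A) j f = coeff (R := A) j g) :
    coeff (R := A) n (expPS f) = coeff (R := A) n (expPS g) := by
  have hd : (X : PowerSeries A) ^ (n+1) ∣ f - g := by
    rw [X_pow_dvd_iff]; intro m hm; simp [h m (Nat.lt_succ_iff.mp hm)]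
  simp only [coeff_expPS]
  refine Finset.sum_congr rfl fun m _ => ?_
  have : coeff (R := A) n (f ^ m) = coeff (R := A) n (g ^ m) := by
    have hd2 : (X : PowerSeries A) ^ (n+1) ∣ f ^ m - g ^ m :=
      dvd_trans hd (sub_dvd_pow_sub_pow f g m)
    rw [X_pow_dvd_iff] at hd2
    have := hd2 n (Nat.lt_succ_self n)
    rw [map_sub] at this; exact sub_eq_zero.mp this
  rw [this]

lemma constantCoeff_expPS (g : PowerSeries A) : constantCoeff (R := A) (expPS g) = 1 := by
  have := coeff_expPS g 0
  simp at this
  simpa [← coeff_zero_eq_constantCoeff] using this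

lemma derivative_expPS {g : PowerSeries A} (hg : constantCoeff (R := A) g = 0) :
    d⁄dX A (expPS g) = d⁄dX A g * expPS g := by
  ext n
  rw [coeff_derivative, coeff_expPS, Finset.sum_mul]
  have l1 : ∀ m ∈ range (n+2), ((m.factorial:ℚ)⁻¹ • coeff (R := A) (n+1) (g^m)) * ((n:A)+1)
      = (m.factorial:ℚ)⁻¹ • coeff (R := A) n (d⁄dX A (g^m)) := fun m _ => by
    rw [coeff_derivative, smul_mul_assoc]
  rw [Finset.sum_congr rfl l1]
  have l2 : ∀ m : ℕ, coeff (R := A) n (d⁄dX A (g^(m+1)))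
      = (m+1) • coeff (R := A) n (g^m * d⁄dX A g) := fun m => by
    simp only [Derivation.leibniz_pow, Nat.add_sub_cancel, smul_eq_mul, map_nsmul]
  -- LHS = Σ_{m∈range(n+1)} (m!)⁻¹ • coeff_n (g^m * dg)
  have lhs_eq : ∑ m ∈ range (n+2), (m.factorial:ℚ)⁻¹ • coeff (R := A) n (d⁄dX A (g^m))
      = ∑ m ∈ range (n+1), (m.factorial:ℚ)⁻¹ • coeff (R := A) n (g^m * d⁄dX A g) := by
    rw [Finset.sum_range_succ']
    have h0 : ((Nat.factorial 0 : ℚ))⁻¹ • coeff (R := A) n (d⁄dX A (g^0)) = 0 := by simp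
    rw [h0, add_zero]
    refine Finset.sum_congr rfl fun m _ => ?_
    rw [l2, ← Nat.cast_smul_eq_nsmul ℚ, smul_smul]
    congr 1
    have h1 : ((m+1 : ℕ) : ℚ) ≠ 0 := by positivity
    have h2 : ((m.factorial : ℕ) : ℚ) ≠ 0 := Nat.cast_ne_zero.mpr m.factorial_ne_zero
    rw [Nat.factorial_succ]
    push_cast
    field_simp
  rw [lhs_eq, PowerSeries.coeff_mul]
  have rhs_eq : ∀ p ∈ antidiagonal n, coeff (R := A) p.1 (d⁄dX A g) * coeff (R := A) p.2 (expPS g)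
      = ∑ m ∈ range (n+1), (m.factorial:ℚ)⁻¹ •
          (coeff (R := A) p.1 (d⁄dX A g) * coeff (R := A) p.2 (g^m)) := by
    intro p hp
    rw [coeff_expPS, Finset.mul_sum]
    have hle : p.2 + 1 ≤ n + 1 := by
      have := Finset.HasAntidiagonal.antidiagonal.snd_le hp; omega
    rw [Finset.sum_subset (Finset.range_subset_range.mpr hle)]
    · exact Finset.sum_congr rfl fun m _ => by rw [mul_smul_comm]
    · intro m _ hm
      rw [coeff_pow_eq_zero hg (by simpa using hm)]
      simp
  rw [Finset.sum_congr rfl rhs_eq, Finset.sum_comm]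
  refine Finset.sum_congr rfl fun m _ => ?_
  rw [← Finset.smul_sum, ← PowerSeries.coeff_mul, mul_comm (g^m)]

lemma ode_unique_s2 {u v h : PowerSeries A} (hu : d⁄dX A u = h * u)
    (hv : d⁄dX A v = h * v) (h0 : coeff (R := A) 0 u = coeff (R := A) 0 v) : u = v := by
  ext n
  induction n using Nat.strong_induction_on with
  | _ n ih =>
    match n with
    | 0 => exact h0
    | Nat.succ n =>
      have e1 : coeff (R := A) n (d⁄dX A u) = coeff (R := A) n (d⁄dX A v) := by
        rw [hu, hv, PowerSeries.coeff_mul, PowerSeries.coeff_mul]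
        refine Finset.sum_congr rfl fun p hp => ?_
        rw [ih p.2 (by have := Finset.HasAntidiagonal.antidiagonal.snd_le hp; omega)]
      rw [coeff_derivative, coeff_derivative] at e1
      have hq : ((n : ℚ) + 1) ≠ 0 := by positivity
      have hc : ((n : A) + 1) = algebraMap ℚ A ((n:ℚ) + 1) := by
        rw [map_add, map_one, map_natCast]
      rw [hc] at e1
      have e2 : ((n:ℚ)+1)⁻¹ • (coeff (R := A) (n+1) u * algebraMap ℚ A ((n:ℚ)+1))
          = coeff (R := A) (n+1) u := by
        rw [mul_comm, ← Algebra.smul_def, smul_smul, inv_mul_cancel₀ hq, one_smul]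
      have e3 : ((n:ℚ)+1)⁻¹ • (coeff (R := A) (n+1) v * algebraMap ℚ A ((n:ℚ)+1))
          = coeff (R := A) (n+1) v := by
        rw [mul_comm, ← Algebra.smul_def, smul_smul, inv_mul_cancel₀ hq, one_smul]
      rw [← e2, ← e3, e1]

lemma expPS_add {f g : PowerSeries A} (hf : constantCoeff (R := A) f = 0)
    (hg : constantCoeff (R := A) g = 0) : expPS (f + g) = expPS f * expPS g := by
  have hfg : constantCoeff (R := A) (f + g) = 0 := by rw [map_add, hf, hg, add_zero]
  refine ode_unique_s2 (h := d⁄dX A (f + g)) (derivative_expPS hfg) ?_ ?_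
  · rw [Derivation.leibniz, smul_eq_mul, smul_eq_mul, derivative_expPS hf,
      derivative_expPS hg, map_add]
    ring
  · simp [coeff_zero_eq_constantCoeff, map_mul, constantCoeff_expPS]

lemma expPS_sum {ι : Type*} (s : Finset ι) (f : ι → PowerSeries A)
    (h : ∀ i ∈ s, constantCoeff (R := A) (f i) = 0) :
    expPS (∑ i ∈ s, f i) = ∏ i ∈ s, expPS (f i) := by
  induction s using Finset.cons_induction with
  | empty =>
    simp only [Finset.sum_empty, Finset.prod_empty]
    ext n
    rw [coeff_expPS]
    rcases n with _ | n
    · simp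
    · rw [PowerSeries.coeff_one, if_neg (Nat.succ_ne_zero n)]
      refine Finset.sum_eq_zero fun m hm => ?_
      rcases m with _ | m
      · simp [PowerSeries.coeff_one]
      · simp [zero_pow]
  | cons a s ha ih =>
    rw [Finset.sum_cons, Finset.prod_cons,
      expPS_add (h a (Finset.mem_cons_self a s)) (by
        rw [map_sum]
        exact Finset.sum_eq_zero fun i hi => h i (Finset.mem_cons_of_mem hi)),
      ih (fun i hi => h i (Finset.mem_cons_of_mem hi))]

lemma constantCoeff_negLogOneSub (k : ℕ) : constantCoeff (R := A) (negLogOneSub A k) = 0 := by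
  rw [← coeff_zero_eq_constantCoeff]
  simp [negLogOneSub]

lemma expPS_negLogOneSub_one : expPS (negLogOneSub ℚ 1) = PowerSeries.mk fun _ => (1 : ℚ) := by
  have hdg : d⁄dX ℚ (negLogOneSub ℚ 1) = PowerSeries.mk fun _ => (1 : ℚ) := by
    ext n
    rw [coeff_derivative]
    simp only [negLogOneSub, coeff_mk]
    rw [if_pos ⟨one_dvd _, Nat.succ_ne_zero n⟩]
    simp only [Nat.div_one, smul_eq_mul, mul_one]
    push_cast
    rw [inv_mul_cancel₀ (by positivity : ((n : ℚ) + 1) ≠ 0)]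
  refine ode_unique_s2 (h := d⁄dX ℚ (negLogOneSub ℚ 1))
    (derivative_expPS (constantCoeff_negLogOneSub 1)) ?_ ?_
  · rw [hdg]
    ext n
    rw [coeff_derivative, PowerSeries.coeff_mul]
    simp [Finset.Nat.card_antidiagonal, mul_comm]
  · simp [coeff_zero_eq_constantCoeff, constantCoeff_expPS]

lemma expPS_rescale_map (a : A) (g : PowerSeries ℚ) :
    expPS (rescale a (PowerSeries.map (algebraMap ℚ A) g))
      = rescale a (PowerSeries.map (algebraMap ℚ A) (expPS g)) := by
  ext n
  rw [coeff_expPS, coeff_rescale, PowerSeries.coeff_map, coeff_expPS]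
  rw [map_sum, Finset.mul_sum]
  refine Finset.sum_congr rfl fun m _ => ?_
  have : (rescale a (PowerSeries.map (algebraMap ℚ A) g)) ^ m
      = rescale a (PowerSeries.map (algebraMap ℚ A) (g ^ m)) := by
    rw [map_pow, map_pow]
  rw [this, coeff_rescale, PowerSeries.coeff_map]
  rw [Algebra.smul_def, Algebra.smul_def, map_mul]
  simp only [Algebra.algebraMap_self_apply]
  ring

lemma coeff_prod_geom (σ : Type*) [Fintype σ] [DecidableEq σ] (n : ℕ) :
    coeff (R := MvPolynomial σ ℚ) n (∏ i : σ, PowerSeries.mk fun j => (X i : MvPolynomial σ ℚ) ^ j)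
      = hsymm σ ℚ n := by
  rw [PowerSeries.coeff_prod]
  simp only [coeff_mk]
  rw [hsymm]
  have key : ∀ l : σ →₀ ℕ, ((Finsupp.toMultiset l).map MvPolynomial.X).prod
      = ∏ i : σ, (X i : MvPolynomial σ ℚ) ^ l i := by
    intro l
    rw [Finsupp.toMultiset_map, Finsupp.prod_toMultiset,
      Finsupp.prod_mapDomain_index (fun i => pow_zero _) (fun i a b => pow_add _ a b)]
    rw [Finsupp.prod]
    exact Finset.prod_subset (Finset.subset_univ _) (by
      intro i _ hi
      rw [Finsupp.notMem_support_iff.mp hi, pow_zero])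
  have hsum : ∀ l : σ →₀ ℕ, (l.sum fun _ => id) = univ.sum ⇑l := fun l => by
    rw [Finsupp.sum]
    exact Finset.sum_subset (Finset.subset_univ _)
      (fun i _ hi => Finsupp.notMem_support_iff.mp hi)
  refine Finset.sum_bij' (i := fun l hl => (⟨Finsupp.toMultiset l, ?_⟩ : Sym σ n))
    (j := fun s _ => Multiset.toFinsupp s.1) ?_ ?_ ?_ ?_ ?_
  · rw [Finsupp.card_toMultiset]
    have := (Finset.mem_finsuppAntidiag.mp hl).1
    rw [hsum l]
    exact this
  · intro l hl; exact Finset.mem_univ _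
  · intro s hs; rw [Finset.mem_finsuppAntidiag]
    constructor
    · rw [← hsum, Multiset.toFinsupp_sum_eq]
      exact s.2
    · exact Finset.subset_univ _
  · intro l hl; simp
  · intro s hs; simp [Sym.ext_iff]; rfl
  · intro l hl
    simp only
    exact (key l).symm

variable (σ : Type*) [Fintype σ] [DecidableEq σ]

noncomputable def psumSeries : PowerSeries (MvPolynomial σ ℚ) :=
  PowerSeries.mk fun j => if j = 0 then 0 else ((j : ℚ)⁻¹ : ℚ) • psum σ ℚ j

lemma expPS_psumSeries : expPS (psumSeries σ) = PowerSeries.mk fun k => hsymm σ ℚ k := by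
  have hdecomp : psumSeries σ = ∑ i : σ,
      rescale (X i) (PowerSeries.map (algebraMap ℚ (MvPolynomial σ ℚ)) (negLogOneSub ℚ 1)) := by
    ext j
    rw [psumSeries, coeff_mk, map_sum]
    simp only [coeff_rescale, PowerSeries.coeff_map, negLogOneSub, coeff_mk]
    rcases eq_or_ne j 0 with rfl | hj
    · simp
    · rw [if_neg hj]
      have : ∀ i : σ, (X i : MvPolynomial σ ℚ) ^ j *
          algebraMap ℚ (MvPolynomial σ ℚ) (coeff (R := ℚ) j (negLogOneSub ℚ 1))
          = ((j:ℚ)⁻¹ : ℚ) • (X i : MvPolynomial σ ℚ) ^ j := fun i => by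
        rw [negLogOneSub, coeff_mk, if_pos ⟨one_dvd _, hj⟩, Nat.div_one]
        rw [smul_eq_mul, mul_one, Algebra.smul_def]
        ring
      simp only [negLogOneSub, coeff_mk] at this ⊢
      rw [Finset.sum_congr rfl (fun i _ => this i), ← Finset.smul_sum, psum]
  rw [hdecomp, expPS_sum _ _ (fun i _ => by
    rw [← coeff_zero_eq_constantCoeff, coeff_rescale, PowerSeries.coeff_map,
      show coeff (R := ℚ) 0 (negLogOneSub ℚ 1) = (0:ℚ) from by simp [negLogOneSub],
      map_zero, mul_zero])]
  have : ∀ i : σ, expPS (rescale (X i)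
      (PowerSeries.map (algebraMap ℚ (MvPolynomial σ ℚ)) (negLogOneSub ℚ 1)))
      = PowerSeries.mk fun j => (X i : MvPolynomial σ ℚ) ^ j := fun i => by
    rw [expPS_rescale_map, expPS_negLogOneSub_one]
    ext j
    rw [coeff_rescale, PowerSeries.coeff_map, coeff_mk, coeff_mk, map_one, mul_one]
  rw [Finset.prod_congr rfl (fun i _ => this i)]
  ext j
  rw [coeff_prod_geom, coeff_mk]

lemma moebius_inversion (j : ℕ) (hj : 0 < j) :
    ∑ k ∈ j.divisors, ∑ d ∈ k.divisors,
      (ArithmeticFunction.moebius (k / d) : ℤ) • psum σ ℚ d = psum σ ℚ j := by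
  have h := (ArithmeticFunction.sum_eq_iff_sum_smul_moebius_eq
    (R := MvPolynomial σ ℚ)
    (f := fun k => ∑ d ∈ k.divisors, (ArithmeticFunction.moebius (k / d) : ℤ) • psum σ ℚ d)
    (g := fun n => psum σ ℚ n)).mpr ?_
  · exact h j hj
  · intro m hm
    exact Nat.sum_divisorsAntidiagonal'
      (f := fun x y => (ArithmeticFunction.moebius x : ℤ) • psum σ ℚ y)

end Aux

/-- `Σ_{k≥0} h_k t^k = Π_{k≥1} (1 - t^k)^{-p'_k}` over `MvPolynomial σ ℚ`, the
infinite product converging coefficientwise: in each degree `n` only factors with `k ≤ n`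
contribute. -/
theorem stmt2 (σ : Type*) [Fintype σ] [DecidableEq σ] :
    ∀ n : ℕ,
      PowerSeries.coeff (R := MvPolynomial σ ℚ) n (PowerSeries.mk fun k => hsymm σ ℚ k)
        = PowerSeries.coeff (R := MvPolynomial σ ℚ) n
            (∏ k ∈ Finset.Icc 1 n, onePowNeg k (moebiusPsum σ k)) := by
  intro n
  set A := MvPolynomial σ ℚ
  set G := ∑ k ∈ Finset.Icc 1 n, (moebiusPsum σ k) • negLogOneSub A k with hG
  have hprod : ∏ k ∈ Finset.Icc 1 n, onePowNeg k (moebiusPsum σ k) = expPS G := by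
    rw [hG, expPS_sum _ _ (fun k _ => by
      rw [PowerSeries.smul_eq_C_mul, map_mul, constantCoeff_negLogOneSub, mul_zero])]
    rfl
  have hcoeffG : ∀ j ≤ n, coeff (R := A) j G = coeff (R := A) j (psumSeries σ) := by
    intro j hjn
    rw [hG, map_sum]
    simp only [map_smul, negLogOneSub, coeff_mk, psumSeries, smul_eq_mul]
    rcases eq_or_ne j 0 with rfl | hj
    · simp
    · rw [if_neg hj]
      have hsub : Nat.divisors j ⊆ Finset.Icc 1 n := by
        intro k hk
        have h1 := Nat.pos_of_mem_divisors hk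
        have h2 := Nat.le_of_dvd (Nat.pos_of_ne_zero hj) (Nat.dvd_of_mem_divisors hk)
        exact Finset.mem_Icc.mpr ⟨h1, le_trans h2 hjn⟩
      rw [← Finset.sum_subset hsub (fun k hk hkd => by
        rw [if_neg, mul_zero]
        intro ⟨hdvd, _⟩
        exact hkd (Nat.mem_divisors.mpr ⟨hdvd, hj⟩))]
      have hterm : ∀ k ∈ Nat.divisors j,
          moebiusPsum σ k * (if k ∣ j ∧ j ≠ 0 then (((j / k : ℕ) : ℚ)⁻¹ : ℚ) • (1 : A) else 0)
          = (j : ℚ)⁻¹ • ∑ d ∈ k.divisors, (ArithmeticFunction.moebius (k / d) : ℤ) • psum σ ℚ d := by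
        intro k hk
        obtain ⟨hdvd, hj0⟩ := Nat.mem_divisors.mp hk
        have hk0 : k ≠ 0 := by
          rintro rfl
          exact hj (Nat.eq_zero_of_zero_dvd hdvd)
        rw [if_pos ⟨hdvd, hj⟩, mul_smul_comm, mul_one, moebiusPsum, smul_smul]
        congr 1
        rw [Nat.cast_div hdvd (by exact_mod_cast hk0)]
        field_simp
      rw [Finset.sum_congr rfl hterm, ← Finset.smul_sum, moebius_inversion σ j (Nat.pos_of_ne_zero hj)]
  rw [hprod, ← expPS_psumSeries σ]
  exact (coeff_expPS_congr hcoeffG).symm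
end

section
/- Let f ∈ ℤ[[t]] be a formal power series with constant coefficient 1. Then there exists a unique sequence of integers (a_k)_{k≥1} such that f = Π_{k≥1} (1 − t^k)^{−a_k}, where (1 − t^k)^{−a_k} denotes the (−a_k)-th power of the unit 1 − t^k in the group of units of ℤ[[t]], and the infinite product converges coefficientwise (in each degree n only the factors with k ≤ n contribute). -/
open PowerSeries Finset

/-- Integer power `g^a` of a power series `g` whose constant coefficient is a unit (so that
`g` is a unit in `R⟦t⟧`): for `a ≥ 0` the usual power, for `a < 0` the power of the inverse
(computed via `Ring.inverse`). -/
noncomputable def unitZPow {R : Type*} [CommRing R] (g : PowerSeries R) (a : ℤ) :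
    PowerSeries R :=
  if 0 ≤ a then g ^ a.toNat else Ring.inverse (g ^ (-a).toNat)

/-- Auxiliary: `(1 - X^n)^m ≡ 1 - m·X^n (mod X^{n+1})` for `n ≥ 1`. -/
lemma Dm_dvd (n : ℕ) (hn : 1 ≤ n) (m : ℕ) :
    (PowerSeries.X : PowerSeries ℤ) ^ (n + 1) ∣
      (1 - PowerSeries.X ^ n) ^ m - 1 + (m : PowerSeries ℤ) * PowerSeries.X ^ n := by
  induction m with
  | zero => simp
  | succ m ih =>
    have h2 : (PowerSeries.X : PowerSeries ℤ) ^ (n + 1) ∣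
        PowerSeries.X ^ n * PowerSeries.X ^ n := by
      rw [← pow_add]; exact pow_dvd_pow _ (by omega)
    have hsum := dvd_add (ih.mul_right (1 - PowerSeries.X ^ n))
      (h2.mul_left (m : PowerSeries ℤ))
    have key : (1 - (PowerSeries.X : PowerSeries ℤ) ^ n) ^ (m + 1) - 1
          + ((m + 1 : ℕ) : PowerSeries ℤ) * PowerSeries.X ^ n
        = ((1 - PowerSeries.X ^ n) ^ m - 1 + (m : PowerSeries ℤ) * PowerSeries.X ^ n)
            * (1 - PowerSeries.X ^ n)
          + (m : PowerSeries ℤ) * (PowerSeries.X ^ n * PowerSeries.X ^ n) := by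
      push_cast
      ring
    rw [key]
    exact hsum

lemma isUnit_one_sub_X_pow (n : ℕ) (hn : 1 ≤ n) :
    IsUnit ((1 : PowerSeries ℤ) - PowerSeries.X ^ n) := by
  rw [PowerSeries.isUnit_iff_constantCoeff]
  have : (PowerSeries.constantCoeff (R := ℤ)) ((1 : PowerSeries ℤ) - PowerSeries.X ^ n) = 1 := by
    simp [map_sub, map_pow, PowerSeries.constantCoeff_X, zero_pow (by omega : n ≠ 0)]
  rw [this]
  exact isUnit_one

/-- Key congruence: `unitZPow (1 - X^n) e ≡ 1 - e·X^n (mod X^{n+1})` for `n ≥ 1`. -/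
lemma unitZPow_key (n : ℕ) (hn : 1 ≤ n) (e : ℤ) :
    (PowerSeries.X : PowerSeries ℤ) ^ (n + 1) ∣
      unitZPow (1 - PowerSeries.X ^ n) e - 1
        + PowerSeries.C (R := ℤ) e * PowerSeries.X ^ n := by
  unfold unitZPow
  split_ifs with h
  · have hD := Dm_dvd n hn e.toNat
    have hC : PowerSeries.C (R := ℤ) e = ((e.toNat : ℕ) : PowerSeries ℤ) := by
      rw [← map_natCast (PowerSeries.C (R := ℤ)) e.toNat, Int.toNat_of_nonneg h]
    rw [hC]
    exact hD
  · set m := (-e).toNat with hm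
    have hme : (m : ℤ) = -e := Int.toNat_of_nonneg (by omega)
    set g : PowerSeries ℤ := 1 - PowerSeries.X ^ n with hg
    have hu : IsUnit (g ^ m) := (isUnit_one_sub_X_pow n hn).pow m
    have h1 : g ^ m * Ring.inverse (g ^ m) = 1 := Ring.mul_inverse_cancel _ hu
    have hC : PowerSeries.C (R := ℤ) e = -((m : ℕ) : PowerSeries ℤ) := by
      rw [← map_natCast (PowerSeries.C (R := ℤ)) m, ← map_neg, hme, neg_neg]
    set M : PowerSeries ℤ := ((m : ℕ) : PowerSeries ℤ) with hM
    have hD := Dm_dvd n hn m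
    have h2 : (PowerSeries.X : PowerSeries ℤ) ^ (n + 1) ∣
        PowerSeries.X ^ n * PowerSeries.X ^ n := by
      rw [← pow_add]; exact pow_dvd_pow _ (by omega)
    have hgoal : (PowerSeries.X : PowerSeries ℤ) ^ (n + 1) ∣
        g ^ m * (Ring.inverse (g ^ m) - 1 - M * PowerSeries.X ^ n) := by
      have hE : g ^ m * (Ring.inverse (g ^ m) - 1 - M * PowerSeries.X ^ n)
          = (-(g ^ m - 1 + M * PowerSeries.X ^ n)) * (1 + M * PowerSeries.X ^ n)
            + M * M * (PowerSeries.X ^ n * PowerSeries.X ^ n) := by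
        linear_combination h1
      rw [hE]
      exact dvd_add ((dvd_neg.mpr hD).mul_right _) (h2.mul_left _)
    have := (hu.dvd_mul_left (a := (PowerSeries.X : PowerSeries ℤ) ^ (n + 1))
      (b := Ring.inverse (g ^ m) - 1 - M * PowerSeries.X ^ n)).mp hgoal
    rw [hC]
    have heq : Ring.inverse (g ^ m) - 1 + -M * PowerSeries.X ^ n
        = Ring.inverse (g ^ m) - 1 - M * PowerSeries.X ^ n := by ring
    rw [heq]
    exact this

lemma constCoeff_unitZPow (n : ℕ) (hn : 1 ≤ n) (e : ℤ) :
    PowerSeries.constantCoeff (R := ℤ) (unitZPow (1 - PowerSeries.X ^ n) e) = 1 := by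
  have h := unitZPow_key n hn e
  rw [PowerSeries.X_pow_dvd_iff] at h
  have h0 := h 0 (by omega)
  have hx : (PowerSeries.coeff (R := ℤ) 0) ((PowerSeries.X : PowerSeries ℤ) ^ n) = 0 := by
    rw [PowerSeries.coeff_X_pow]
    simp [Nat.ne_of_lt hn |>.symm]
    omega
  simp only [map_add, map_sub, PowerSeries.coeff_zero_eq_constantCoeff, map_one] at h0
  rw [PowerSeries.coeff_zero_eq_constantCoeff] at hx
  rw [show (PowerSeries.constantCoeff (R := ℤ)) (PowerSeries.C (R := ℤ) e * PowerSeries.X ^ n)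
      = e * (PowerSeries.constantCoeff (R := ℤ)) (PowerSeries.X ^ n) by
    rw [← PowerSeries.coeff_zero_eq_constantCoeff, PowerSeries.coeff_C_mul,
      PowerSeries.coeff_zero_eq_constantCoeff], hx] at h0
  linarith

/-- Splitting lemma: in degree `n ≥ 1`, the `k = n` factor contributes exactly `c n`. -/
lemma coeff_split (c : ℕ → ℤ) (n : ℕ) (hn : 1 ≤ n) :
    PowerSeries.coeff (R := ℤ) n
        (∏ k ∈ Finset.Icc 1 n, unitZPow (1 - PowerSeries.X ^ k) (-(c k)))
      = PowerSeries.coeff (R := ℤ) n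
          (∏ k ∈ Finset.Icc 1 (n - 1), unitZPow (1 - PowerSeries.X ^ k) (-(c k)))
        + c n := by
  obtain ⟨N, rfl⟩ : ∃ N, n = N + 1 := ⟨n - 1, by omega⟩
  rw [Finset.prod_Icc_succ_top (by omega)]
  simp only [Nat.add_sub_cancel]
  set P : PowerSeries ℤ :=
    ∏ k ∈ Finset.Icc 1 N, unitZPow (1 - PowerSeries.X ^ k) (-(c k)) with hP
  set u : PowerSeries ℤ := unitZPow (1 - PowerSeries.X ^ (N + 1)) (-(c (N + 1))) with hu
  obtain ⟨r, hr⟩ := unitZPow_key (N + 1) (by omega) (-(c (N + 1)))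
  rw [map_neg, neg_mul] at hr
  have hur : u = 1 + PowerSeries.C (R := ℤ) (c (N + 1)) * PowerSeries.X ^ (N + 1)
      + PowerSeries.X ^ (N + 2) * r := by
    linear_combination hr
  have hPu : P * u = P
      + PowerSeries.C (R := ℤ) (c (N + 1)) * (P * PowerSeries.X ^ (N + 1))
      + PowerSeries.X ^ (N + 2) * (P * r) := by
    rw [hur]; ring
  rw [hPu, map_add, map_add]
  have hP0 : PowerSeries.coeff (R := ℤ) 0 P = 1 := by
    rw [PowerSeries.coeff_zero_eq_constantCoeff, hP, map_prod]
    exact Finset.prod_eq_one fun k hk =>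
      constCoeff_unitZPow k (Finset.mem_Icc.mp hk).1 _
  have hmid : PowerSeries.coeff (R := ℤ) (N + 1)
      (PowerSeries.C (R := ℤ) (c (N + 1)) * (P * PowerSeries.X ^ (N + 1))) = c (N + 1) := by
    rw [PowerSeries.coeff_C_mul]
    have := PowerSeries.coeff_mul_X_pow P (N + 1) 0
    rw [zero_add] at this
    rw [this, hP0, mul_one]
  have hhigh : PowerSeries.coeff (R := ℤ) (N + 1)
      (PowerSeries.X ^ (N + 2) * (P * r)) = 0 := by
    have : (PowerSeries.X : PowerSeries ℤ) ^ (N + 2) ∣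
        PowerSeries.X ^ (N + 2) * (P * r) := dvd_mul_right _ _
    rw [PowerSeries.X_pow_dvd_iff] at this
    exact this (N + 1) (by omega)
  rw [hmid, hhigh, add_zero]

/-- The recursively-defined exponent sequence. -/
noncomputable def aSeq (f : PowerSeries ℤ) : ℕ → ℤ
  | n =>
    PowerSeries.coeff (R := ℤ) n f -
      PowerSeries.coeff (R := ℤ) n
        (∏ k ∈ (Finset.Icc 1 (n - 1)).attach,
          unitZPow (1 - PowerSeries.X ^ (k : ℕ)) (-(aSeq f k)))
termination_by n => n
decreasing_by
  have hk := k.2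
  simp only [Finset.mem_Icc] at hk
  omega

lemma aSeq_eq (f : PowerSeries ℤ) (n : ℕ) :
    aSeq f n = PowerSeries.coeff (R := ℤ) n f -
      PowerSeries.coeff (R := ℤ) n
        (∏ k ∈ Finset.Icc 1 (n - 1),
          unitZPow (1 - PowerSeries.X ^ k) (-(aSeq f k))) := by
  conv_lhs => rw [aSeq]
  rw [Finset.prod_attach (Finset.Icc 1 (n - 1))
    (fun k => unitZPow (1 - PowerSeries.X ^ k) (-(aSeq f k)))]

lemma aSeq_spec (f : PowerSeries ℤ) (hf : PowerSeries.constantCoeff (R := ℤ) f = 1) (n : ℕ) :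
    PowerSeries.coeff (R := ℤ) n f
      = PowerSeries.coeff (R := ℤ) n
          (∏ k ∈ Finset.Icc 1 n, unitZPow (1 - PowerSeries.X ^ k) (-(aSeq f k))) := by
  rcases Nat.eq_zero_or_pos n with rfl | hn
  · have : Finset.Icc 1 0 = (∅ : Finset ℕ) := by simp
    rw [this, Finset.prod_empty, PowerSeries.coeff_zero_eq_constantCoeff, map_one, hf]
  · rw [coeff_split (aSeq f) n hn]
    have := aSeq_eq f n
    linarith

/-- every `f ∈ ℤ[[t]]` with constant coefficient `1` has a unique expression as
a coefficientwise-convergent Euler product `f = Π_{k≥1} (1 - t^k)^{-a_k}` with integers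
`a_k`; in each degree `n` only the factors with `k ≤ n` contribute. -/
theorem stmt3 (f : PowerSeries ℤ) (hf : PowerSeries.constantCoeff (R := ℤ) f = 1) :
    ∃ a : ℕ → ℤ,
      (∀ n : ℕ,
        PowerSeries.coeff (R := ℤ) n f
          = PowerSeries.coeff (R := ℤ) n
              (∏ k ∈ Finset.Icc 1 n, unitZPow (1 - PowerSeries.X ^ k) (-(a k)))) ∧
      ∀ b : ℕ → ℤ,
        (∀ n : ℕ,
          PowerSeries.coeff (R := ℤ) n f
            = PowerSeries.coeff (R := ℤ) n
                (∏ k ∈ Finset.Icc 1 n, unitZPow (1 - PowerSeries.X ^ k) (-(b k)))) →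
        ∀ k : ℕ, 1 ≤ k → b k = a k := by
  refine ⟨aSeq f, aSeq_spec f hf, ?_⟩
  intro b hb k
  induction k using Nat.strong_induction_on with
  | _ k ih =>
    intro hk
    have h1 := hb k
    have h2 := aSeq_spec f hf k
    rw [coeff_split b k hk] at h1
    rw [coeff_split (aSeq f) k hk] at h2
    have hp : (∏ j ∈ Finset.Icc 1 (k - 1),
          unitZPow (1 - (PowerSeries.X : PowerSeries ℤ) ^ j) (-(b j)))
        = ∏ j ∈ Finset.Icc 1 (k - 1),
          unitZPow (1 - (PowerSeries.X : PowerSeries ℤ) ^ j) (-(aSeq f j)) := by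
      refine Finset.prod_congr rfl fun j hj => ?_
      have hj' := Finset.mem_Icc.mp hj
      rw [ih j (by omega) hj'.1]
    rw [hp] at h1
    linarith
end

section
/- Let R be a commutative ℚ-algebra equipped with a pre-λ structure σ, let f ∈ ℤ[[t]] ⊆ R[[t]] have constant coefficient 1, and let (a_k)_{k≥1} be the unique integers with f = Π_{k≥1} (1 − t^k)^{−a_k}. For r ∈ R define the power f^{Pow r} := Π_{k≥1} σ(a_k·r)(t^k) ∈ R[[t]], where σ(a_k·r)(t^k) denotes the substitution t ↦ t^k applied to σ(a_k·r) (the product converges coefficientwise since σ(a_k·r)(t^k) ≡ 1 mod t^k). Then f^{Pow r} = Π_{k≥1} exp( ψ'_k(r) · log f(t^k) ), where f(t^k) is f with t ↦ t^k, log(1 + g) := Σ_{n≥1} (−1)^{n+1} g^n/n and exp(g) := Σ_{n≥0} g^n/n! for g of zero constant term, and this product also converges coefficientwise. -/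
open PowerSeries Finset

/-- Substitution `t ↦ t^k` in a formal power series (for `k ≥ 1`):
`(substPow k g)(t) = g(t^k)`. -/
noncomputable def substPow {R : Type*} [CommRing R] (k : ℕ) (g : PowerSeries R) :
    PowerSeries R :=
  PowerSeries.mk fun j => if k ∣ j then PowerSeries.coeff (R := R) (j / k) g else 0

/-- The logarithm `log(1 + h) = Σ_{m≥1} (-1)^{m+1} h^m/m` for `h` of zero constant term;
each coefficient is a finite sum. -/
noncomputable def logOnePlus {A : Type*} [CommRing A] [Algebra ℚ A] (h : PowerSeries A) :
    PowerSeries A :=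
  PowerSeries.mk fun n =>
    ∑ m ∈ Finset.Icc 1 n, (((-1 : ℚ) ^ (m + 1) * (m : ℚ)⁻¹)) • PowerSeries.coeff (R := A) n (h ^ m)

/-- The Möbius-inverted Adams operations `ψ'_k(r) := (1/k) Σ_{d ∣ k} μ(k/d) ψ_d(r)`. -/
noncomputable def moebiusAdams {R : Type*} [CommRing R] [Algebra ℚ R]
    (ψ : ℕ → R → R) (k : ℕ) (r : R) : R :=
  ((k : ℚ)⁻¹ : ℚ) • ∑ d ∈ k.divisors, (ArithmeticFunction.moebius (k / d) : ℤ) • ψ d r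

namespace Stmt7


variable {A : Type*} [CommRing A]

lemma coeff_substPow (k j : ℕ) (g : PowerSeries A) :
    coeff (R := A) j (substPow k g) = if k ∣ j then coeff (R := A) (j / k) g else 0 :=
  coeff_mk _ _

lemma constantCoeff_substPow (k : ℕ) (g : PowerSeries A) :
    constantCoeff (R := A) (substPow k g) = constantCoeff (R := A) g := by
  rw [← coeff_zero_eq_constantCoeff, coeff_substPow]
  simp

lemma substPow_one (k : ℕ) : substPow k (1 : PowerSeries A) = 1 := by
  ext j
  rw [coeff_substPow, coeff_one, coeff_one]
  rcases Nat.eq_zero_or_pos j with rfl | hj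
  · simp
  · rw [if_neg hj.ne']
    by_cases h1 : k ∣ j
    · rw [if_pos h1, if_neg]
      intro h2
      have h3 := Nat.div_mul_cancel h1
      rw [h2, zero_mul] at h3
      exact hj.ne' h3.symm
    · rw [if_neg h1]

lemma substPow_sub (k : ℕ) (g h : PowerSeries A) :
    substPow k (g - h) = substPow k g - substPow k h := by
  ext j
  rw [map_sub, coeff_substPow, coeff_substPow, coeff_substPow, map_sub]
  split_ifs <;> simp

lemma substPow_mul {k : ℕ} (hk : k ≠ 0) (g h : PowerSeries A) :
    substPow k (g * h) = substPow k g * substPow k h := by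
  ext j
  rw [coeff_substPow]
  by_cases hkj : k ∣ j
  · obtain ⟨m, rfl⟩ := hkj
    rw [if_pos ⟨m, rfl⟩, Nat.mul_div_cancel_left _ (Nat.pos_of_ne_zero hk),
      PowerSeries.coeff_mul, PowerSeries.coeff_mul]
    have hsub : (antidiagonal m).image (fun uv : ℕ × ℕ => (k * uv.1, k * uv.2))
        ⊆ antidiagonal (k * m) := by
      intro x hx
      simp only [mem_image] at hx
      obtain ⟨⟨u, v⟩, huv, rfl⟩ := hx
      rw [HasAntidiagonal.mem_antidiagonal] at huv ⊢
      rw [← Nat.mul_add, huv]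
    rw [← Finset.sum_subset hsub]
    · rw [Finset.sum_image]
      · apply Finset.sum_congr rfl
        intro ⟨u, v⟩ _
        simp only
        rw [coeff_substPow, coeff_substPow, if_pos ⟨u, rfl⟩, if_pos ⟨v, rfl⟩,
          Nat.mul_div_cancel_left _ (Nat.pos_of_ne_zero hk),
          Nat.mul_div_cancel_left _ (Nat.pos_of_ne_zero hk)]
      · intro ⟨u, v⟩ _ ⟨u', v'⟩ _ hEq
        simp only [Prod.mk.injEq] at hEq
        obtain ⟨h1, h2⟩ := hEq
        have := Nat.eq_of_mul_eq_mul_left (Nat.pos_of_ne_zero hk) h1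
        have := Nat.eq_of_mul_eq_mul_left (Nat.pos_of_ne_zero hk) h2
        simp_all
    · intro ⟨p, q⟩ hmem hnot
      rw [HasAntidiagonal.mem_antidiagonal] at hmem
      simp only [coeff_substPow]
      by_cases hp : k ∣ p
      · by_cases hq : k ∣ q
        · exfalso
          apply hnot
          simp only [mem_image]
          obtain ⟨u, rfl⟩ := hp
          obtain ⟨v, rfl⟩ := hq
          refine ⟨(u, v), ?_, rfl⟩
          rw [HasAntidiagonal.mem_antidiagonal]
          have : k * (u + v) = k * m := by rw [Nat.mul_add, hmem]
          exact Nat.eq_of_mul_eq_mul_left (Nat.pos_of_ne_zero hk) this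
        · rw [if_neg hq, mul_zero]
      · rw [if_neg hp, zero_mul]
  · rw [if_neg hkj, PowerSeries.coeff_mul]
    symm
    apply Finset.sum_eq_zero
    intro ⟨p, q⟩ hmem
    rw [HasAntidiagonal.mem_antidiagonal] at hmem
    simp only [coeff_substPow]
    by_cases hp : k ∣ p
    · by_cases hq : k ∣ q
      · exact absurd (hmem ▸ Nat.dvd_add hp hq) hkj
      · rw [if_neg hq, mul_zero]
    · rw [if_neg hp, zero_mul]

lemma substPow_pow {k : ℕ} (hk : k ≠ 0) (g : PowerSeries A) (m : ℕ) :
    substPow k (g ^ m) = (substPow k g) ^ m := by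
  induction m with
  | zero => simpa using substPow_one k
  | succ m ih => rw [pow_succ, pow_succ, substPow_mul hk, ih]

lemma coeff_X_mul_derivative (u : PowerSeries A) (j : ℕ) :
    coeff (R := A) j (X * derivative A u) = (j : A) * coeff (R := A) j u := by
  cases j with
  | zero =>
    rw [coeff_zero_eq_constantCoeff, map_mul, constantCoeff_X, zero_mul]
    simp
  | succ n =>
    rw [coeff_succ_X_mul, coeff_derivative]
    push_cast
    ring

lemma X_deriv_substPow {k : ℕ} (hk : k ≠ 0) (u : PowerSeries A) :
    X * derivative A (substPow k u) = k • substPow k (X * derivative A u) := by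
  ext j
  rw [coeff_X_mul_derivative, map_nsmul, coeff_substPow, coeff_substPow]
  by_cases h : k ∣ j
  · rw [if_pos h, if_pos h, coeff_X_mul_derivative, nsmul_eq_mul]
    obtain ⟨c, rfl⟩ := h
    rw [Nat.mul_div_cancel_left _ (Nat.pos_of_ne_zero hk)]
    push_cast
    ring
  · rw [if_neg h, if_neg h, mul_zero, smul_zero]


-- CHUNK2

def SuppMul (k : ℕ) (u : PowerSeries A) : Prop := ∀ j, ¬ k ∣ j → coeff (R := A) j u = 0

lemma suppMul_one (k : ℕ) : SuppMul k (1 : PowerSeries A) := by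
  intro j hj
  have : j ≠ 0 := by rintro rfl; exact hj (dvd_zero k)
  rw [coeff_one, if_neg this]

lemma suppMul_mul {k : ℕ} {u v : PowerSeries A} (hu : SuppMul k u) (hv : SuppMul k v) :
    SuppMul k (u * v) := by
  intro j hj
  rw [PowerSeries.coeff_mul]
  apply Finset.sum_eq_zero
  rintro ⟨p, q⟩ hmem
  rw [HasAntidiagonal.mem_antidiagonal] at hmem
  by_cases hp : k ∣ p
  · by_cases hq : k ∣ q
    · exact absurd (hmem ▸ Nat.dvd_add hp hq) hj
    · rw [hv q hq, mul_zero]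
  · rw [hu p hp, zero_mul]

lemma suppMul_pow {k : ℕ} {u : PowerSeries A} (hu : SuppMul k u) (m : ℕ) :
    SuppMul k (u ^ m) := by
  induction m with
  | zero => simpa using suppMul_one k
  | succ m ih => rw [pow_succ]; exact suppMul_mul ih hu

lemma suppMul_sub {k : ℕ} {u v : PowerSeries A} (hu : SuppMul k u) (hv : SuppMul k v) :
    SuppMul k (u - v) := by
  intro j hj; rw [map_sub, hu j hj, hv j hj, sub_zero]

lemma suppMul_smul {Q : Type*} [Semiring Q] [Module Q A] {k : ℕ} {u : PowerSeries A} (c : Q)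
    (hu : SuppMul k u) : SuppMul k (c • u) := by
  intro j hj; rw [PowerSeries.coeff_smul, hu j hj, smul_zero]

lemma suppMul_substPow (k : ℕ) (g : PowerSeries A) : SuppMul k (substPow k g) := by
  intro j hj; rw [coeff_substPow, if_neg hj]

lemma suppMul_of_mul_eq_one {k : ℕ} {u v : PowerSeries A} (h : u * v = 1)
    (hu : SuppMul k u) : SuppMul k v := by
  intro j
  induction j using Nat.strong_induction_on with
  | _ j IH =>
    intro hj
    have hj0 : j ≠ 0 := by rintro rfl; exact hj (dvd_zero k)
    have h0 : coeff (R := A) j (u * v) = 0 := by rw [h, coeff_one, if_neg hj0]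
    rw [PowerSeries.coeff_mul, Finset.sum_eq_single (0, j)] at h0
    · have h1 : constantCoeff (R := A) u * constantCoeff (R := A) v = 1 := by
        rw [← map_mul, h, map_one]
      have h2 := congrArg (fun x => constantCoeff (R := A) v * x) h0
      simp only [mul_zero] at h2
      calc coeff (R := A) j v
          = (constantCoeff (R := A) v * constantCoeff (R := A) u) * coeff (R := A) j v := by
            rw [mul_comm (constantCoeff (R := A) v), h1, one_mul]
        _ = 0 := by
            simp only [coeff_zero_eq_constantCoeff] at h2
            rw [mul_assoc]
            exact h2
    · rintro ⟨p, q⟩ hmem hne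
      rw [HasAntidiagonal.mem_antidiagonal] at hmem
      have hp0 : p ≠ 0 := by
        rintro rfl
        simp only [zero_add] at hmem
        exact hne (by rw [hmem])
      by_cases hp : k ∣ p
      · have hq : ¬ k ∣ q := fun hdq => hj (hmem ▸ Nat.dvd_add hp hdq)
        rw [IH q (by omega) hq, mul_zero]
      · rw [hu p hp, zero_mul]
    · intro hmem; exact absurd (HasAntidiagonal.mem_antidiagonal.mpr (by simp)) hmem

def Near1 (m : ℕ) (u : PowerSeries A) : Prop :=
  constantCoeff (R := A) u = 1 ∧ ∀ j, 0 < j → j ≤ m → coeff (R := A) j u = 0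

lemma near1_one (m : ℕ) : Near1 m (1 : PowerSeries A) :=
  ⟨map_one _, fun j hj _ => by rw [coeff_one, if_neg hj.ne']⟩

lemma near1_mul {m : ℕ} {u v : PowerSeries A} (hu : Near1 m u) (hv : Near1 m v) :
    Near1 m (u * v) := by
  constructor
  · rw [map_mul, hu.1, hv.1, one_mul]
  · intro j hj hjm
    rw [PowerSeries.coeff_mul]
    apply Finset.sum_eq_zero
    rintro ⟨p, q⟩ hmem
    rw [HasAntidiagonal.mem_antidiagonal] at hmem
    rcases Nat.eq_zero_or_pos p with rfl | hp
    · rw [hv.2 q (by omega) (by omega), mul_zero]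
    · rw [hu.2 p hp (by omega), zero_mul]

lemma near1_of_suppMul {m k : ℕ} {u : PowerSeries A} (hmk : m < k) (hu : SuppMul k u)
    (hc : constantCoeff (R := A) u = 1) : Near1 m u :=
  ⟨hc, fun j hj hjm => hu j fun hd => absurd (Nat.le_of_dvd hj hd) (by omega)⟩

lemma coeff_mul_near1 {m : ℕ} {v : PowerSeries A} (hv : Near1 m v) (u : PowerSeries A)
    {j : ℕ} (hj : j ≤ m) : coeff (R := A) j (u * v) = coeff (R := A) j u := by
  rw [PowerSeries.coeff_mul, Finset.sum_eq_single (j, 0)]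
  · rw [coeff_zero_eq_constantCoeff, hv.1, mul_one]
  · rintro ⟨p, q⟩ hmem hne
    rw [HasAntidiagonal.mem_antidiagonal] at hmem
    have hq : 0 < q := by
      rcases Nat.eq_zero_or_pos q with rfl | h
      · exact absurd (by simp only [add_zero] at hmem; rw [hmem]) hne
      · exact h
    rw [hv.2 q hq (by omega), mul_zero]
  · intro hmem; exact absurd (HasAntidiagonal.mem_antidiagonal.mpr (by simp)) hmem

lemma near1_prod {m : ℕ} {ι : Type*} (s : Finset ι) (g : ι → PowerSeries A)
    (h : ∀ i ∈ s, Near1 m (g i)) : Near1 m (∏ i ∈ s, g i) :=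
  Finset.prod_induction g (Near1 m) (fun _ _ => near1_mul) (near1_one m) h

lemma coeff_prod_Icc_stable {u : ℕ → PowerSeries A} {m N : ℕ} (hmN : m ≤ N)
    (h : ∀ k, m < k → k ≤ N → SuppMul k (u k) ∧ constantCoeff (R := A) (u k) = 1) :
    coeff (R := A) m (∏ k ∈ Icc 1 N, u k) = coeff (R := A) m (∏ k ∈ Icc 1 m, u k) := by
  have hunion : Icc 1 m ∪ Icc (m+1) N = Icc 1 N := by
    ext x; simp only [mem_union, mem_Icc]; omega
  have hdisj : Disjoint (Icc 1 m) (Icc (m+1) N) := by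
    simp only [Finset.disjoint_left, mem_Icc]; omega
  rw [← hunion, Finset.prod_union hdisj]
  refine coeff_mul_near1 (near1_prod _ _ fun k hk => ?_) _ le_rfl
  rw [mem_Icc] at hk
  exact near1_of_suppMul (by omega) (h k (by omega) hk.2).1 (h k (by omega) hk.2).2

lemma coeff_pow_eq_zero {g : PowerSeries A} (hg : constantCoeff (R := A) g = 0) {j m : ℕ}
    (hjm : j < m) : coeff (R := A) j (g ^ m) = 0 := by
  obtain ⟨v, hv⟩ := pow_dvd_pow_of_dvd (PowerSeries.X_dvd_iff.mpr hg) m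
  rw [hv, coeff_X_pow_mul', if_neg (by omega)]

lemma X_deriv_mul (u v : PowerSeries A) :
    X * derivative A (u * v) = u * (X * derivative A v) + v * (X * derivative A u) := by
  rw [Derivation.leibniz]
  simp only [smul_eq_mul]
  ring

lemma X_deriv_prod {ι : Type*} {s : Finset ι} {g e : ι → PowerSeries A}
    (h : ∀ i ∈ s, X * derivative A (g i) = e i * g i) :
    X * derivative A (∏ i ∈ s, g i) = (∑ i ∈ s, e i) * ∏ i ∈ s, g i := by
  classical
  induction s using Finset.induction_on with
  | empty => simp
  | @insert a s ha ih =>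
    rw [Finset.prod_insert ha, Finset.sum_insert ha, X_deriv_mul,
      ih fun i hi => h i (mem_insert_of_mem hi), h a (mem_insert_self _ _)]
    ring

lemma X_deriv_pow_succ (g : PowerSeries A) (m : ℕ) :
    X * derivative A (g ^ (m+1)) = (m+1) • (g ^ m * (X * derivative A g)) := by
  induction m with
  | zero => simp
  | succ m ih =>
    have h2 : g * (g ^ m * (X * derivative A g)) = g ^ (m+1) * (X * derivative A g) := by
      rw [← mul_assoc, ← pow_succ']
    rw [pow_succ, X_deriv_mul, ih, mul_smul_comm, h2]
    conv_rhs => rw [succ_nsmul]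
    exact add_comm _ _

lemma sum_Icc_ite_divisors {M : Type*} [AddCommMonoid M] {i n : ℕ} (hi : 1 ≤ i) (hin : i ≤ n)
    (F : ℕ → M) :
    ∑ k ∈ Icc 1 n, (if k ∣ i then F k else 0) = ∑ k ∈ i.divisors, F k := by
  have hsub : i.divisors ⊆ Icc 1 n := by
    intro k hk
    rw [Nat.mem_divisors] at hk
    rw [mem_Icc]
    have hk0 : k ≠ 0 := by rintro rfl; exact hk.2 (Nat.eq_zero_of_zero_dvd hk.1)
    exact ⟨by omega, le_trans (Nat.le_of_dvd hi hk.1) hin⟩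
  rw [← Finset.sum_subset hsub (fun k _ hk' => by
    rw [if_neg fun hd => hk' (Nat.mem_divisors.mpr ⟨hd, by omega⟩)])]
  exact Finset.sum_congr rfl fun k hk => if_pos (Nat.mem_divisors.mp hk).1


-- CHUNK4
noncomputable def geom (A : Type*) [CommRing A] (k : ℕ) : PowerSeries A :=
  PowerSeries.mk fun j => if k ∣ j then 1 else 0

lemma one_sub_Xpow_mul_geom {k : ℕ} (hk : k ≠ 0) :
    ((1 : PowerSeries A) - X ^ k) * geom A k = 1 := by
  ext j
  rw [sub_mul, one_mul, map_sub, coeff_X_pow_mul']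
  simp only [geom, coeff_mk, coeff_one]
  by_cases hd : k ∣ j
  · rcases Nat.eq_zero_or_pos j with rfl | hj
    · rw [if_pos hd, if_neg (by omega), sub_zero, if_pos rfl]
    · have hkj : k ≤ j := Nat.le_of_dvd hj hd
      rw [if_pos hd, if_pos hkj, if_pos (Nat.dvd_sub hd dvd_rfl), sub_self, if_neg hj.ne']
  · have hj0 : j ≠ 0 := by rintro rfl; exact hd (dvd_zero k)
    rw [if_neg hd, if_neg hj0]
    by_cases hkj : k ≤ j
    · rw [if_pos hkj, if_neg fun hd2 => hd (by
        have := Nat.dvd_add hd2 (dvd_refl k)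
        rwa [Nat.sub_add_cancel hkj] at this), sub_zero]
    · rw [if_neg hkj, sub_zero]

lemma suppMul_one_sub_Xpow (k : ℕ) : SuppMul k ((1 : PowerSeries A) - X ^ k) := by
  intro j hj
  have hj0 : j ≠ 0 := by rintro rfl; exact hj (dvd_zero k)
  have hjk : j ≠ k := by rintro rfl; exact hj dvd_rfl
  rw [map_sub, coeff_one, coeff_X_pow, if_neg hj0, if_neg hjk, sub_zero]

lemma constantCoeff_one_sub_Xpow {k : ℕ} (hk : k ≠ 0) :
    constantCoeff (R := A) ((1 : PowerSeries A) - X ^ k) = 1 := by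
  rw [map_sub, map_one, map_pow, constantCoeff_X, zero_pow hk, sub_zero]

lemma isUnit_of_constantCoeff_one {u : PowerSeries A} (h : constantCoeff (R := A) u = 1) :
    IsUnit u :=
  PowerSeries.isUnit_iff_constantCoeff.mpr (h ▸ isUnit_one)

lemma X_deriv_one_sub_Xpow (k : ℕ) :
    X * derivative A ((1 : PowerSeries A) - X ^ k) = -((k : ℕ) • X ^ k) := by
  ext j
  rw [coeff_X_mul_derivative, map_sub, coeff_one, coeff_X_pow, map_neg, map_nsmul, coeff_X_pow]
  by_cases h2 : j = k
  · subst h2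
    rw [if_pos rfl]
    by_cases h1 : j = 0
    · subst h1; simp
    · rw [if_neg h1, nsmul_eq_mul, mul_one, zero_sub, mul_neg, mul_one]
  · rw [if_neg h2]
    by_cases h1 : j = 0
    · subst h1; simp
    · rw [if_neg h1, sub_zero, mul_zero, smul_zero, neg_zero]

lemma X_deriv_pow_mul (u : PowerSeries A) (m : ℕ) :
    (X * derivative A (u ^ m)) * u = m • (u ^ m * (X * derivative A u)) := by
  cases m with
  | zero => simp
  | succ m =>
    rw [X_deriv_pow_succ, smul_mul_assoc]
    congr 1
    ring

lemma unitZPow_fact {k : ℕ} (hk : k ≠ 0) (b : ℤ) :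
    constantCoeff (R := A) (unitZPow ((1 : PowerSeries A) - X ^ k) (-b)) = 1
    ∧ SuppMul k (unitZPow ((1 : PowerSeries A) - X ^ k) (-b))
    ∧ X * derivative A (unitZPow ((1 : PowerSeries A) - X ^ k) (-b))
        = (((k : ℤ) * b) • (X ^ k * geom A k)) * unitZPow ((1 : PowerSeries A) - X ^ k) (-b) := by
  set w : PowerSeries A := (1 : PowerSeries A) - X ^ k with hwdef
  have hconstw : constantCoeff (R := A) w = 1 := constantCoeff_one_sub_Xpow hk
  have hw : w * geom A k = 1 := one_sub_Xpow_mul_geom hk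
  have hunit_w : IsUnit w := isUnit_of_constantCoeff_one hconstw
  have hDw : X * derivative A w = -((k : ℕ) • X ^ k) := X_deriv_one_sub_Xpow k
  have hsw : SuppMul k w := suppMul_one_sub_Xpow k
  by_cases hb : 0 ≤ -b
  · set m : ℕ := (-b).toNat with hmdef
    have hb' : b = -(m : ℤ) := by simp only [hmdef]; omega
    have huz : unitZPow w (-b) = w ^ m := by rw [unitZPow, if_pos hb]
    rw [huz]
    refine ⟨by rw [map_pow, hconstw, one_pow], suppMul_pow hsw m, ?_⟩
    refine (hunit_w.pow 1).mul_right_cancel ?_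
    rw [pow_one]
    rw [X_deriv_pow_mul, hDw, hb', smul_mul_assoc, smul_mul_assoc]
    have haux : X ^ k * geom A k * w ^ m * w = X ^ k * w ^ m := by
      rw [show X ^ k * geom A k * w ^ m * w = w * geom A k * (X ^ k * w ^ m) by ring,
        hw, one_mul]
    rw [haux, zsmul_eq_mul, nsmul_eq_mul, nsmul_eq_mul]
    push_cast
    ring
  · set m : ℕ := b.toNat with hmdef
    have hb' : b = (m : ℤ) := by simp only [hmdef]; omega
    have huz : unitZPow w (-b) = Ring.inverse (w ^ m) := by
      rw [unitZPow, if_neg hb, neg_neg]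
    rw [huz]
    set u : PowerSeries A := Ring.inverse (w ^ m) with hudef
    have hu : u * w ^ m = 1 := Ring.inverse_mul_cancel _ (hunit_w.pow m)
    have hconstu : constantCoeff (R := A) u = 1 := by
      have := congrArg (constantCoeff (R := A)) hu
      rw [map_mul, map_pow, hconstw, one_pow, mul_one, map_one] at this
      exact this
    refine ⟨hconstu, suppMul_of_mul_eq_one (by rw [mul_comm]; exact hu) (suppMul_pow hsw m), ?_⟩
    have hprod : u * (X * derivative A (w ^ m)) + w ^ m * (X * derivative A u) = 0 := by
      have h1 : X * derivative A (u * w ^ m) = 0 := by rw [hu]; simp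
      rw [X_deriv_mul] at h1
      exact h1
    refine (hunit_w.pow (m+1)).mul_right_cancel ?_
    have lhs : X * derivative A u * w ^ (m+1)
        = -(m • (-((k : ℕ) • X ^ k))) := by
      calc X * derivative A u * w ^ (m+1)
          = (w ^ m * (X * derivative A u)) * w := by ring
        _ = (-(u * (X * derivative A (w ^ m)))) * w := by
            have hswap : w ^ m * (X * derivative A u)
                = -(u * (X * derivative A (w ^ m))) := by
              linear_combination hprod
            rw [hswap]
        _ = -(u * ((X * derivative A (w ^ m)) * w)) := by ring
        _ = -(u * (m • (w ^ m * (X * derivative A w)))) := by rw [X_deriv_pow_mul]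
        _ = -(m • (u * w ^ m * (X * derivative A w))) := by
            rw [mul_smul_comm, ← mul_assoc]
        _ = -(m • (X * derivative A w)) := by rw [hu, one_mul]
        _ = -(m • (-((k : ℕ) • X ^ k))) := by rw [hDw]
    have rhs : (((k : ℤ) * b) • (X ^ k * geom A k)) * u * w ^ (m+1)
        = ((k : ℤ) * b) • X ^ k := by
      calc (((k : ℤ) * b) • (X ^ k * geom A k)) * u * w ^ (m+1)
          = ((k : ℤ) * b) • (w * geom A k * (u * w ^ m) * X ^ k) := by
            rw [smul_mul_assoc, smul_mul_assoc]
            congr 1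
            ring
        _ = ((k : ℤ) * b) • X ^ k := by rw [hw, hu]; simp
    rw [lhs, rhs, hb', zsmul_eq_mul, nsmul_eq_mul, nsmul_eq_mul]
    push_cast
    ring

lemma map_derivative {B : Type*} [CommRing B] (φ : A →+* B) (u : PowerSeries A) :
    derivative B (PowerSeries.map φ u) = PowerSeries.map φ (derivative A u) := by
  ext n
  rw [coeff_derivative, coeff_map, coeff_map, coeff_derivative, map_mul, map_add,
    map_natCast, map_one]

-- CHUNK3
section QAlg
variable {A : Type*} [CommRing A] [Algebra ℚ A]

lemma constantCoeff_logOnePlus (h : PowerSeries A) : constantCoeff (R := A) (logOnePlus h) = 0 := by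
  rw [← coeff_zero_eq_constantCoeff]
  simp [logOnePlus]

lemma constantCoeff_expPS (g : PowerSeries A) : constantCoeff (R := A) (expPS g) = 1 := by
  rw [← coeff_zero_eq_constantCoeff]
  simp [expPS]

lemma suppMul_expPS {k : ℕ} {g : PowerSeries A} (hg : SuppMul k g) : SuppMul k (expPS g) := by
  intro j hj
  simp only [expPS, coeff_mk]
  apply Finset.sum_eq_zero
  intro m _
  rw [suppMul_pow hg m j hj, smul_zero]

lemma suppMul_logOnePlus {k : ℕ} {h : PowerSeries A} (hh : SuppMul k h) :
    SuppMul k (logOnePlus h) := by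
  intro j hj
  simp only [logOnePlus, coeff_mk]
  apply Finset.sum_eq_zero
  intro m _
  rw [suppMul_pow hh m j hj, smul_zero]

lemma coeff_expPS (g : PowerSeries A) (n : ℕ) :
    coeff (R := A) n (expPS g) = ∑ m ∈ range (n+1), (m.factorial : ℚ)⁻¹ • coeff (R := A) n (g ^ m) := by
  simp only [expPS, coeff_mk]

lemma coeff_logOnePlus (h : PowerSeries A) (n : ℕ) :
    coeff (R := A) n (logOnePlus h)
      = ∑ m ∈ Icc 1 n, (((-1 : ℚ) ^ (m + 1) * (m : ℚ)⁻¹)) • coeff (R := A) n (h ^ m) := by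
  simp only [logOnePlus, coeff_mk]

lemma coeff_mul_mk_sum (a : ℕ) (c : ℕ → ℚ) (w : ℕ → PowerSeries A)
    (hvan : ∀ m q, q < m → coeff (R := A) q (w m) = 0) (v : PowerSeries A) (n : ℕ) :
    coeff (R := A) n (v * PowerSeries.mk fun j => ∑ m ∈ Icc a j, c m • coeff (R := A) j (w m))
      = ∑ m ∈ Icc a n, c m • coeff (R := A) n (v * w m) := by
  rw [PowerSeries.coeff_mul]
  have step1 : ∀ p : ℕ × ℕ, p ∈ antidiagonal n →
      coeff (R := A) p.1 v * coeff (R := A) p.2 (PowerSeries.mk fun j => ∑ m ∈ Icc a j, c m • coeff (R := A) j (w m))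
      = ∑ m ∈ Icc a n, c m • (coeff (R := A) p.1 v * coeff (R := A) p.2 (w m)) := by
    rintro ⟨p, q⟩ hmem
    rw [HasAntidiagonal.mem_antidiagonal] at hmem
    rw [coeff_mk]
    have hq : q ≤ n := by omega
    have hext : ∑ m ∈ Icc a q, c m • coeff (R := A) q (w m)
        = ∑ m ∈ Icc a n, c m • coeff (R := A) q (w m) := by
      apply Finset.sum_subset (Finset.Icc_subset_Icc_right hq)
      intro m hm hm'
      rw [mem_Icc] at hm hm'
      rw [hvan m q (by omega), smul_zero]
    rw [hext, Finset.mul_sum]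
    apply Finset.sum_congr rfl
    intro m _
    rw [mul_smul_comm]
  rw [Finset.sum_congr rfl step1, Finset.sum_comm]
  apply Finset.sum_congr rfl
  intro m _
  rw [PowerSeries.coeff_mul, Finset.smul_sum]

lemma coeff_mul_expPS {g : PowerSeries A} (hg : constantCoeff (R := A) g = 0) (v : PowerSeries A)
    (n : ℕ) : coeff (R := A) n (v * expPS g)
      = ∑ m ∈ range (n+1), (m.factorial : ℚ)⁻¹ • coeff (R := A) n (v * g ^ m) := by
  have hIcc : ∀ j : ℕ, Icc 0 j = range (j+1) := by
    intro j; ext x; simp only [mem_Icc, mem_range]; omega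
  have hexp : expPS g = PowerSeries.mk fun j =>
      ∑ m ∈ Icc 0 j, (m.factorial : ℚ)⁻¹ • coeff (R := A) j (g ^ m) := by
    ext j
    simp only [expPS, coeff_mk, hIcc]
  rw [hexp, coeff_mul_mk_sum 0 _ _ (fun m q hqm => coeff_pow_eq_zero hg hqm), hIcc]

lemma X_deriv_expPS {g : PowerSeries A} (hg : constantCoeff (R := A) g = 0) :
    X * derivative A (expPS g) = (X * derivative A g) * expPS g := by
  have hXd0 : constantCoeff (R := A) (X * derivative A g) = 0 := by
    rw [map_mul, constantCoeff_X, zero_mul]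
  ext n
  rw [coeff_X_mul_derivative, coeff_expPS, Finset.mul_sum]
  have l1 : ∀ m ∈ range (n+1), (n : A) * ((m.factorial : ℚ)⁻¹ • coeff (R := A) n (g ^ m))
      = (m.factorial : ℚ)⁻¹ • coeff (R := A) n (X * derivative A (g ^ m)) := by
    intro m _
    rw [mul_smul_comm, coeff_X_mul_derivative]
  rw [Finset.sum_congr rfl l1, Finset.sum_range_succ']
  have l0 : (Nat.factorial 0 : ℚ)⁻¹ • coeff (R := A) n (X * derivative A (g ^ 0)) = 0 := by
    simp
  rw [l0, add_zero]
  have l2 : ∀ i ∈ range n, (Nat.factorial (i+1) : ℚ)⁻¹ • coeff (R := A) n (X * derivative A (g ^ (i+1)))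
      = (i.factorial : ℚ)⁻¹ • coeff (R := A) n ((X * derivative A g) * g ^ i) := by
    intro i _
    rw [X_deriv_pow_succ, map_nsmul, ← Nat.cast_smul_eq_nsmul ℚ, smul_smul]
    congr 1
    · rw [Nat.factorial_succ]
      push_cast
      rw [mul_inv]
      field_simp
    · rw [mul_comm]
  rw [Finset.sum_congr rfl l2, coeff_mul_expPS hg, Finset.sum_range_succ]
  have hlast : coeff (R := A) n ((X * derivative A g) * g ^ n) = 0 := by
    rw [PowerSeries.coeff_mul]
    apply Finset.sum_eq_zero
    rintro ⟨p, q⟩ hmem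
    rw [HasAntidiagonal.mem_antidiagonal] at hmem
    rcases Nat.lt_or_ge q n with hq | hq
    · rw [coeff_pow_eq_zero hg hq, mul_zero]
    · have hp : p = 0 := by omega
      subst hp
      rw [coeff_zero_eq_constantCoeff, hXd0, zero_mul]
  rw [hlast, smul_zero, add_zero]

lemma telescope (T : ℕ → A) (n : ℕ) :
    ∑ m ∈ Icc 1 n, ((-1 : ℚ)^(m+1) • (T (m-1) + T m))
      = T 0 + ((-1 : ℚ)^(n+1)) • T n := by
  induction n with
  | zero =>
    simp
  | succ n IH =>
    rw [Finset.sum_Icc_succ_top (by omega), IH]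
    simp only [Nat.add_sub_cancel]
    have hneg : ((-1 : ℚ)^(n+1+1)) = -((-1 : ℚ)^(n+1)) := by ring
    rw [hneg, smul_add, neg_smul, neg_smul]
    abel

lemma one_add_X_deriv_logOnePlus {h : PowerSeries A} (hh : constantCoeff (R := A) h = 0) :
    (1 + h) * (X * derivative A (logOnePlus h)) = X * derivative A h := by
  have hXd0 : constantCoeff (R := A) (X * derivative A h) = 0 := by
    rw [map_mul, constantCoeff_X, zero_mul]
  have hvan : ∀ m q, q < m → coeff (R := A) q (h^(m-1) * (X * derivative A h)) = 0 := by
    intro m q hqm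
    rw [PowerSeries.coeff_mul]
    apply Finset.sum_eq_zero
    rintro ⟨p, u⟩ hmem
    rw [HasAntidiagonal.mem_antidiagonal] at hmem
    rcases Nat.lt_or_ge p (m-1) with hp | hp
    · rw [coeff_pow_eq_zero hh hp, zero_mul]
    · have hu : u = 0 := by omega
      subst hu
      rw [coeff_zero_eq_constantCoeff, hXd0, mul_zero]
  have hXdL : X * derivative A (logOnePlus h)
      = PowerSeries.mk fun n => ∑ m ∈ Icc 1 n,
          ((-1 : ℚ)^(m+1)) • coeff (R := A) n (h^(m-1) * (X * derivative A h)) := by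
    ext n
    rw [coeff_X_mul_derivative, coeff_mk, coeff_logOnePlus, Finset.mul_sum]
    apply Finset.sum_congr rfl
    intro m hm
    rw [mem_Icc] at hm
    obtain ⟨m', rfl⟩ : ∃ m', m = m' + 1 := ⟨m - 1, by omega⟩
    rw [mul_smul_comm, ← coeff_X_mul_derivative, X_deriv_pow_succ, map_nsmul,
      ← Nat.cast_smul_eq_nsmul ℚ, smul_smul, Nat.add_sub_cancel]
    congr 1
    have : ((m' : ℚ) + 1) ≠ 0 := by positivity
    push_cast
    field_simp
  rw [add_mul, one_mul, hXdL]
  ext n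
  rw [map_add, coeff_mk,
    coeff_mul_mk_sum 1 _ _ hvan h n]
  have l3 : ∀ m ∈ Icc 1 n, ((-1 : ℚ)^(m+1)) • coeff (R := A) n (h * (h^(m-1) * (X * derivative A h)))
      = ((-1 : ℚ)^(m+1)) • coeff (R := A) n (h^m * (X * derivative A h)) := by
    intro m hm
    rw [mem_Icc] at hm
    congr 2
    rw [← mul_assoc, ← pow_succ']
    congr 2
    omega
  rw [Finset.sum_congr rfl l3, ← Finset.sum_add_distrib]
  have l4 : ∀ m ∈ Icc 1 n,
      ((-1 : ℚ)^(m+1)) • coeff (R := A) n (h^(m-1) * (X * derivative A h))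
        + ((-1 : ℚ)^(m+1)) • coeff (R := A) n (h^m * (X * derivative A h))
      = ((-1 : ℚ)^(m+1)) • (coeff (R := A) n (h^(m-1) * (X * derivative A h))
          + coeff (R := A) n (h^m * (X * derivative A h))) := by
    intro m _
    rw [smul_add]
  have tel : ∑ m ∈ Icc 1 n, ((-1 : ℚ)^(m+1) • (coeff (R := A) n (h^(m-1) * (X * derivative A h))
        + coeff (R := A) n (h^m * (X * derivative A h))))
      = coeff (R := A) n (h^0 * (X * derivative A h))
        + ((-1 : ℚ)^(n+1)) • coeff (R := A) n (h^n * (X * derivative A h)) :=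
    telescope (fun m => coeff (R := A) n (h^m * (X * derivative A h))) n
  rw [Finset.sum_congr rfl l4, tel]
  have hTn : coeff (R := A) n (h^n * (X * derivative A h)) = 0 := by
    have := hvan (n+1) n (by omega)
    simpa using this
  rw [hTn, smul_zero, add_zero, pow_zero, one_mul]

lemma substPow_logOnePlus {k : ℕ} (hk : k ≠ 0) {h : PowerSeries A}
    (hh : constantCoeff (R := A) h = 0) :
    substPow k (logOnePlus h) = logOnePlus (substPow k h) := by
  ext j
  rw [coeff_substPow]
  simp only [logOnePlus, coeff_mk]
  have hsp : ∀ m, coeff (R := A) j ((substPow k h)^m) = if k ∣ j then coeff (R := A) (j/k) (h^m) else 0 := by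
    intro m
    rw [← substPow_pow hk, coeff_substPow]
  by_cases hd : k ∣ j
  · rw [if_pos hd]
    have hdivle : j / k ≤ j := Nat.div_le_self _ _
    rw [← Finset.sum_subset (Finset.Icc_subset_Icc_right hdivle) ?van]
    · apply Finset.sum_congr rfl
      intro m _
      rw [hsp, if_pos hd]
    case van =>
      intro m hm hm'
      rw [mem_Icc] at hm hm'
      rw [hsp, if_pos hd, coeff_pow_eq_zero hh (by omega), smul_zero]
  · rw [if_neg hd]
    symm
    apply Finset.sum_eq_zero
    intro m hm
    rw [hsp, if_neg hd, smul_zero]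

end QAlg

-- CHUNK5
lemma divisors_pair_iff {i : ℕ} (hi : i ≠ 0) (k d : ℕ) :
    (k ∈ i.divisors ∧ d ∈ (i/k).divisors) ↔ (k ∈ (i/d).divisors ∧ d ∈ i.divisors) := by
  suffices h : ∀ k d : ℕ, (k ∈ i.divisors ∧ d ∈ (i/k).divisors)
      → (k ∈ (i/d).divisors ∧ d ∈ i.divisors) by
    constructor
    · exact h k d
    · intro hkd
      obtain ⟨h1, h2⟩ := h d k ⟨hkd.2, hkd.1⟩
      exact ⟨h2, h1⟩
  rintro k d ⟨hk, hd⟩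
  rw [Nat.mem_divisors] at hk hd
  have hk0 : k ≠ 0 := by rintro rfl; rw [Nat.zero_dvd] at hk; exact hi hk.1
  have hkd : k * d ∣ i := (Nat.dvd_div_iff_mul_dvd hk.1).mp hd.1
  have hd_i : d ∣ i := dvd_trans (dvd_mul_left d k) hkd
  have hd0 : d ≠ 0 := by
    rintro rfl
    rw [Nat.zero_dvd] at hd
    exact hd.2 hd.1
  have hki_d : k ∣ i / d := (Nat.dvd_div_iff_mul_dvd hd_i).mpr (by rwa [mul_comm d k])
  have hid0 : i / d ≠ 0 := by
    have := Nat.div_pos (Nat.le_of_dvd (Nat.pos_of_ne_zero hi) hd_i) (Nat.pos_of_ne_zero hd0)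
    omega
  exact ⟨Nat.mem_divisors.mpr ⟨hki_d, hid0⟩, Nat.mem_divisors.mpr ⟨hd_i, hi⟩⟩

lemma divisors_swap {i : ℕ} (hi : i ≠ 0) {M : Type*} [AddCommMonoid M] (F : ℕ → ℕ → M) :
    ∑ k ∈ i.divisors, ∑ d ∈ (i/k).divisors, F k d
      = ∑ d ∈ i.divisors, ∑ k ∈ (i/d).divisors, F k d :=
  Finset.sum_comm' (divisors_pair_iff hi)

lemma moebius_inv_psi {R : Type*} [CommRing R] (ψ : ℕ → R → R) (r : R) (m : ℕ) (hm : 0 < m) :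
    ∑ k ∈ m.divisors, (∑ d ∈ k.divisors, (ArithmeticFunction.moebius (k/d) : ℤ) • ψ d r)
      = ψ m r := by
  refine (ArithmeticFunction.sum_eq_iff_sum_smul_moebius_eq
    (f := fun k => ∑ d ∈ k.divisors, (ArithmeticFunction.moebius (k/d) : ℤ) • ψ d r)
    (g := fun m => ψ m r)).mpr ?_ m hm
  intro n _
  rw [Nat.sum_divisorsAntidiagonal'
    (f := fun i j => (ArithmeticFunction.moebius i : ℤ) • ψ j r)]

lemma claimZ (f : PowerSeries ℤ) (a : ℕ → ℤ)
    (ha : ∀ n : ℕ, coeff (R := ℤ) n f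
      = coeff (R := ℤ) n (∏ k ∈ Icc 1 n, unitZPow (1 - X ^ k) (-(a k)))) :
    X * derivative ℤ f = (PowerSeries.mk fun i => ∑ k ∈ i.divisors, (k : ℤ) * a k) * f := by
  ext n
  rw [coeff_X_mul_derivative]
  have hcoeffP : ∀ N j : ℕ, j ≤ N →
      coeff (R := ℤ) j (∏ k ∈ Icc 1 N, unitZPow (1 - X ^ k) (-(a k))) = coeff (R := ℤ) j f := by
    intro N j hjN
    rw [coeff_prod_Icc_stable hjN (fun k hk1 _ =>
      ⟨(unitZPow_fact (by omega) (a k)).2.1, (unitZPow_fact (by omega) (a k)).1⟩), ← ha j]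
  have hXdP : X * derivative ℤ (∏ k ∈ Icc 1 n, unitZPow (1 - X ^ k) (-(a k)))
      = (∑ k ∈ Icc 1 n, ((k : ℤ) * a k) • (X ^ k * geom ℤ k))
          * ∏ k ∈ Icc 1 n, unitZPow (1 - X ^ k) (-(a k)) := by
    apply X_deriv_prod
    intro k hk
    rw [mem_Icc] at hk
    exact (unitZPow_fact (by omega) (a k)).2.2
  have h1 : (n : ℤ) * coeff (R := ℤ) n f
      = coeff (R := ℤ) n ((∑ k ∈ Icc 1 n, ((k : ℤ) * a k) • (X ^ k * geom ℤ k))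
          * ∏ k ∈ Icc 1 n, unitZPow (1 - X ^ k) (-(a k))) := by
    conv_lhs => rw [ha n]
    rw [← coeff_X_mul_derivative, hXdP]
  rw [h1, PowerSeries.coeff_mul, PowerSeries.coeff_mul]
  apply Finset.sum_congr rfl
  rintro ⟨i, j⟩ hmem
  rw [HasAntidiagonal.mem_antidiagonal] at hmem
  have hij : i + j = n := by simpa using hmem
  congr 1
  · rw [map_sum, coeff_mk]
    rcases Nat.eq_zero_or_pos i with rfl | hi
    · rw [Nat.divisors_zero, Finset.sum_empty]
      apply Finset.sum_eq_zero
      intro k hk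
      rw [mem_Icc] at hk
      rw [map_zsmul, coeff_X_pow_mul', if_neg (by omega), smul_zero]
    · have hterm : ∀ k ∈ Icc 1 n, coeff (R := ℤ) i (((k : ℤ) * a k) • (X ^ k * geom ℤ k))
          = if k ∣ i then (k : ℤ) * a k else 0 := by
        intro k hk
        rw [mem_Icc] at hk
        rw [map_zsmul, coeff_X_pow_mul']
        simp only [geom, coeff_mk]
        by_cases hd : k ∣ i
        · have hki : k ≤ i := Nat.le_of_dvd hi hd
          rw [if_pos hki, if_pos (Nat.dvd_sub hd dvd_rfl), if_pos hd, smul_eq_mul, mul_one]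
        · rw [if_neg hd]
          by_cases hki : k ≤ i
          · rw [if_pos hki, if_neg (fun hd2 => hd (by
              have := Nat.dvd_add hd2 (dvd_refl k)
              rwa [Nat.sub_add_cancel hki] at this)), smul_zero]
          · rw [if_neg hki, smul_zero]
      rw [Finset.sum_congr rfl hterm]
      exact sum_Icc_ite_divisors hi (by omega) (fun k => (k : ℤ) * a k)
  · exact hcoeffP n j (by omega)

-- CHUNK6A
section Psi
variable {R : Type*} [CommRing R]

lemma psi_series_add (σ : R → PowerSeries R)
    (hconst : ∀ r, constantCoeff (R := R) (σ r) = 1)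
    (hmul : ∀ r s, σ (r + s) = σ r * σ s)
    (ψ : ℕ → R → R)
    (hψ : ∀ r, (PowerSeries.mk fun k => if k = 0 then 0 else ψ k r) * σ r
        = X * derivative R (σ r)) (r s : R) :
    (PowerSeries.mk fun k => if k = 0 then 0 else ψ k (r + s))
      = (PowerSeries.mk fun k => if k = 0 then 0 else ψ k r)
        + (PowerSeries.mk fun k => if k = 0 then 0 else ψ k s) := by
  have hu : IsUnit (σ (r + s)) := isUnit_of_constantCoeff_one (hconst _)
  refine hu.mul_right_cancel ?_
  rw [hψ (r + s)]
  have h2 : X * derivative R (σ (r + s)) = X * derivative R (σ r * σ s) := by rw [hmul]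
  rw [h2, X_deriv_mul, ← hψ r, ← hψ s, hmul]
  ring

lemma psi_add (σ : R → PowerSeries R)
    (hconst : ∀ r, constantCoeff (R := R) (σ r) = 1)
    (hmul : ∀ r s, σ (r + s) = σ r * σ s)
    (ψ : ℕ → R → R)
    (hψ : ∀ r, (PowerSeries.mk fun k => if k = 0 then 0 else ψ k r) * σ r
        = X * derivative R (σ r)) {k : ℕ} (hk : k ≠ 0) (r s : R) :
    ψ k (r + s) = ψ k r + ψ k s := by
  have h := congrArg (coeff (R := R) k) (psi_series_add σ hconst hmul ψ hψ r s)
  rw [map_add, coeff_mk, coeff_mk, coeff_mk, if_neg hk, if_neg hk, if_neg hk] at h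
  exact h

lemma psi_zsmul (σ : R → PowerSeries R)
    (hconst : ∀ r, constantCoeff (R := R) (σ r) = 1)
    (hmul : ∀ r s, σ (r + s) = σ r * σ s)
    (ψ : ℕ → R → R)
    (hψ : ∀ r, (PowerSeries.mk fun k => if k = 0 then 0 else ψ k r) * σ r
        = X * derivative R (σ r)) {k : ℕ} (hk : k ≠ 0) (z : ℤ) (r : R) :
    ψ k (z • r) = z • ψ k r :=
  map_zsmul (AddMonoidHom.mk' (fun x => ψ k x)
    (fun r s => psi_add σ hconst hmul ψ hψ hk r s)) z r

end Psi

end Stmt7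

/-- let `R` be a commutative `ℚ`-algebra with a pre-λ structure `σ` (constant
coefficient `1`, `σ(r+s) = σ(r)·σ(s)`, coefficient of `t` equal to `r`, `σ(1) = Σ t^k`),
with Adams operations `ψ_k` given by the logarithmic-derivative equation.  Let `f ∈ ℤ[[t]]`
have constant coefficient `1` and let `(a_k)` be the unique integers with
`f = Π_{k≥1}(1 - t^k)^{-a_k}`.  Then the power-structure exponential
`f^{Pow r} := Π_{k≥1} σ(a_k·r)(t^k)` equals `Π_{k≥1} exp(ψ'_k(r)·log f(t^k))`, both infinite
products converging coefficientwise (in degree `n` only factors with `k ≤ n` contribute). -/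
theorem stmt7 {R : Type*} [CommRing R] [Algebra ℚ R] (σ : R → PowerSeries R)
    (hconst : ∀ r, PowerSeries.constantCoeff (R := R) (σ r) = 1)
    (hmul : ∀ r s, σ (r + s) = σ r * σ s)
    (hone : ∀ r, PowerSeries.coeff (R := R) 1 (σ r) = r)
    (hσ1 : σ 1 = PowerSeries.mk fun _ => (1 : R))
    (ψ : ℕ → R → R)
    (hψ : ∀ r, (PowerSeries.mk fun k => if k = 0 then 0 else ψ k r) * σ r
        = PowerSeries.X * PowerSeries.derivative R (σ r))
    (f : PowerSeries ℤ) (hf : PowerSeries.constantCoeff (R := ℤ) f = 1)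
    (a : ℕ → ℤ)
    (ha : ∀ n : ℕ,
      PowerSeries.coeff (R := ℤ) n f
        = PowerSeries.coeff (R := ℤ) n
            (∏ k ∈ Finset.Icc 1 n, unitZPow (1 - PowerSeries.X ^ k) (-(a k)))) :
    ∀ (r : R) (n : ℕ),
      PowerSeries.coeff (R := R) n (∏ k ∈ Finset.Icc 1 n, substPow k (σ (a k • r)))
        = PowerSeries.coeff (R := R) n
            (∏ k ∈ Finset.Icc 1 n,
              expPS (moebiusAdams ψ k r •
                logOnePlus (substPow k (PowerSeries.map (Int.castRingHom R) f) - 1))) := by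
  classical
  intro r n
  set F : PowerSeries R := PowerSeries.map (Int.castRingHom R) f with hFdef
  have hconstF : constantCoeff (R := R) F = 1 := by
    rw [hFdef, ← coeff_zero_eq_constantCoeff, PowerSeries.coeff_map,
      coeff_zero_eq_constantCoeff, hf]
    simp
  set BR : PowerSeries R := PowerSeries.map (Int.castRingHom R)
      (PowerSeries.mk fun i => ∑ k ∈ i.divisors, (k : ℤ) * a k) with hBRdef
  have hXdF : X * derivative R F = BR * F := by
    have h0 := Stmt7.claimZ f a ha
    have h1 := congrArg (PowerSeries.map (Int.castRingHom R)) h0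
    rw [map_mul, map_mul, PowerSeries.map_X, ← Stmt7.map_derivative] at h1
    exact h1
  have hconstFm1 : constantCoeff (R := R) (F - 1) = 0 := by
    rw [map_sub, hconstF, map_one, sub_self]
  have hXdL : X * derivative R (logOnePlus (F - 1)) = BR := by
    have h1 := Stmt7.one_add_X_deriv_logOnePlus (A := R) hconstFm1
    have h2 : (1 : PowerSeries R) + (F - 1) = F := by ring
    have h3 : derivative R (F - 1) = derivative R F := by
      rw [map_sub]
      simp
    rw [h2, h3, hXdF] at h1
    have hu : IsUnit F := Stmt7.isUnit_of_constantCoeff_one hconstF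
    refine hu.mul_left_cancel ?_
    rw [h1]
    exact mul_comm _ _
  set C : ℕ → R := fun i => ∑ k ∈ i.divisors, (((k : ℤ) * a k) • ψ (i / k) r) with hCdef
  have hC0 : C 0 = 0 := by rw [hCdef]; simp
  -- LHS recursion
  have claimL : ∀ m : ℕ, (m : R) * coeff (R := R) m (∏ k ∈ Icc 1 m, substPow k (σ (a k • r)))
      = ∑ p ∈ antidiagonal m,
          C p.1 * coeff (R := R) p.2 (∏ k ∈ Icc 1 p.2, substPow k (σ (a k • r))) := by
    intro m
    have hXdP : X * derivative R (∏ k ∈ Icc 1 m, substPow k (σ (a k • r)))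
        = (∑ k ∈ Icc 1 m, (k : ℕ) • substPow k
              (PowerSeries.mk fun j => if j = 0 then 0 else ψ j (a k • r)))
            * ∏ k ∈ Icc 1 m, substPow k (σ (a k • r)) := by
      apply Stmt7.X_deriv_prod
      intro k hk
      rw [mem_Icc] at hk
      have hk0 : k ≠ 0 := by omega
      rw [Stmt7.X_deriv_substPow hk0, ← hψ (a k • r), Stmt7.substPow_mul hk0,
        ← smul_mul_assoc]
    rw [← Stmt7.coeff_X_mul_derivative, hXdP, PowerSeries.coeff_mul]
    apply Finset.sum_congr rfl
    rintro ⟨i, j⟩ hmem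
    rw [HasAntidiagonal.mem_antidiagonal] at hmem
    have hij : i + j = m := by simpa using hmem
    congr 1
    · rw [map_sum]
      rcases Nat.eq_zero_or_pos i with rfl | hi
      · rw [hC0]
        apply Finset.sum_eq_zero
        intro k hk
        rw [map_nsmul, Stmt7.coeff_substPow, if_pos (dvd_zero k), Nat.zero_div, coeff_mk,
          if_pos rfl, smul_zero]
      · have hterm : ∀ k ∈ Icc 1 m, coeff (R := R) i ((k : ℕ) • substPow k
              (PowerSeries.mk fun j => if j = 0 then 0 else ψ j (a k • r)))
            = if k ∣ i then ((k : ℤ) * a k) • ψ (i / k) r else 0 := by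
          intro k hk
          rw [mem_Icc] at hk
          rw [map_nsmul, Stmt7.coeff_substPow]
          by_cases hd : k ∣ i
          · rw [if_pos hd, if_pos hd, coeff_mk]
            have hik0 : i / k ≠ 0 := by
              have h5 := Nat.le_of_dvd hi hd
              have h6 := Nat.div_pos h5 (by omega)
              omega
            rw [if_neg hik0,
              Stmt7.psi_zsmul σ hconst hmul ψ hψ hik0 (a k) r,
              ← natCast_zsmul, smul_smul]
          · rw [if_neg hd, if_neg hd, smul_zero]
        rw [Finset.sum_congr rfl hterm, hCdef]
        exact Stmt7.sum_Icc_ite_divisors hi (by omega) (fun k => ((k : ℤ) * a k) • ψ (i / k) r)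
    · exact Stmt7.coeff_prod_Icc_stable (by omega) (fun k hk1 _ =>
        ⟨Stmt7.suppMul_substPow k _, by
          rw [Stmt7.constantCoeff_substPow, hconst]⟩)
  -- RHS recursion
  have claimR : ∀ m : ℕ, (m : R) * coeff (R := R) m (∏ k ∈ Icc 1 m,
          expPS (moebiusAdams ψ k r • logOnePlus (substPow k F - 1)))
      = ∑ p ∈ antidiagonal m, C p.1 * coeff (R := R) p.2 (∏ k ∈ Icc 1 p.2,
          expPS (moebiusAdams ψ k r • logOnePlus (substPow k F - 1))) := by
    intro m
    have hsub1 : ∀ k : ℕ, k ≠ 0 → substPow k F - 1 = substPow k (F - 1) := by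
      intro k hk
      rw [Stmt7.substPow_sub, Stmt7.substPow_one]
    have hconstLk : ∀ k : ℕ, k ≠ 0 →
        constantCoeff (R := R) (moebiusAdams ψ k r • logOnePlus (substPow k F - 1)) = 0 := by
      intro k hk
      rw [PowerSeries.constantCoeff_smul, Stmt7.constantCoeff_logOnePlus, smul_zero]
    have hXdQ : X * derivative R (∏ k ∈ Icc 1 m,
          expPS (moebiusAdams ψ k r • logOnePlus (substPow k F - 1)))
        = (∑ k ∈ Icc 1 m, moebiusAdams ψ k r • ((k : ℕ) • substPow k BR))
            * ∏ k ∈ Icc 1 m, expPS (moebiusAdams ψ k r • logOnePlus (substPow k F - 1)) := by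
      apply Stmt7.X_deriv_prod
      intro k hk
      rw [mem_Icc] at hk
      have hk0 : k ≠ 0 := by omega
      rw [Stmt7.X_deriv_expPS (hconstLk k hk0)]
      congr 1
      rw [Derivation.map_smul, mul_smul_comm]
      congr 1
      rw [hsub1 k hk0, ← Stmt7.substPow_logOnePlus hk0 hconstFm1,
        Stmt7.X_deriv_substPow hk0, hXdL]
    rw [← Stmt7.coeff_X_mul_derivative, hXdQ, PowerSeries.coeff_mul]
    apply Finset.sum_congr rfl
    rintro ⟨i, j⟩ hmem
    rw [HasAntidiagonal.mem_antidiagonal] at hmem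
    have hij : i + j = m := by simpa using hmem
    congr 1
    · rw [map_sum]
      rcases Nat.eq_zero_or_pos i with rfl | hi
      · rw [hC0]
        apply Finset.sum_eq_zero
        intro k hk
        rw [PowerSeries.coeff_smul, map_nsmul, Stmt7.coeff_substPow, if_pos (dvd_zero k),
          Nat.zero_div, hBRdef, PowerSeries.coeff_map, coeff_mk]
        simp
      · have hM : ∀ k : ℕ, k ≠ 0 → ((k : ℕ) • moebiusAdams ψ k r)
            = ∑ d ∈ k.divisors, (ArithmeticFunction.moebius (k / d) : ℤ) • ψ d r := by
          intro k hk
          rw [moebiusAdams, ← Nat.cast_smul_eq_nsmul ℚ, smul_smul,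
            mul_inv_cancel₀ (by exact_mod_cast hk), one_smul]
        have hterm : ∀ k ∈ Icc 1 m, coeff (R := R) i
              (moebiusAdams ψ k r • ((k : ℕ) • substPow k BR))
            = if k ∣ i then ∑ d ∈ (i / k).divisors,
                (((d : ℤ) * a d) • ((k : ℕ) • moebiusAdams ψ k r)) else 0 := by
          intro k hk
          rw [mem_Icc] at hk
          rw [PowerSeries.coeff_smul, map_nsmul, Stmt7.coeff_substPow]
          by_cases hd : k ∣ i
          · rw [if_pos hd, if_pos hd, hBRdef, PowerSeries.coeff_map, coeff_mk]
            rw [map_sum]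
            rw [Finset.smul_sum, Finset.smul_sum]
            apply Finset.sum_congr rfl
            intro d _
            simp only [smul_eq_mul, nsmul_eq_mul, zsmul_eq_mul, Int.coe_castRingHom]
            push_cast
            ring
          · rw [if_neg hd, if_neg hd, smul_zero, smul_zero]
        rw [Finset.sum_congr rfl hterm,
          Stmt7.sum_Icc_ite_divisors hi (by omega)
            (fun k => ∑ d ∈ (i / k).divisors, (((d : ℤ) * a d) • ((k : ℕ) • moebiusAdams ψ k r))),
          Stmt7.divisors_swap (by omega)
            (fun k d => ((d : ℤ) * a d) • ((k : ℕ) • moebiusAdams ψ k r)), hCdef]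
        apply Finset.sum_congr rfl
        intro d hdmem
        rw [Nat.mem_divisors] at hdmem
        rw [← Finset.smul_sum]
        have hid0 : i / d ≠ 0 := by
          have h7 := Nat.le_of_dvd hi hdmem.1
          have h8 := Nat.div_pos h7 (by
            rcases Nat.eq_zero_or_pos d with rfl | h
            · exfalso; rw [Nat.zero_dvd] at hdmem; omega
            · omega)
          omega
        have hMk : ∑ k ∈ (i / d).divisors, ((k : ℕ) • moebiusAdams ψ k r) = ψ (i / d) r := by
          rw [Finset.sum_congr rfl (fun k hkmem => hM k (by
            rw [Nat.mem_divisors] at hkmem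
            rintro rfl
            rw [Nat.zero_dvd] at hkmem
            exact hid0 hkmem.1))]
          exact Stmt7.moebius_inv_psi ψ r (i / d) (Nat.pos_of_ne_zero hid0)
        rw [hMk]
    · exact Stmt7.coeff_prod_Icc_stable (by omega) (fun k hk1 _ =>
        ⟨Stmt7.suppMul_expPS (Stmt7.suppMul_smul _ (Stmt7.suppMul_logOnePlus
            (Stmt7.suppMul_sub (Stmt7.suppMul_substPow k F) (Stmt7.suppMul_one k)))),
          Stmt7.constantCoeff_expPS _⟩)
  -- strong induction
  induction n using Nat.strong_induction_on with
  | _ n IH =>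
    rcases Nat.eq_zero_or_pos n with rfl | hn
    · rw [show Icc 1 0 = (∅ : Finset ℕ) from rfl]
      simp
    · have h1 := claimL n
      have h2 := claimR n
      have h3 : ∑ p ∈ antidiagonal n,
            C p.1 * coeff (R := R) p.2 (∏ k ∈ Icc 1 p.2, substPow k (σ (a k • r)))
          = ∑ p ∈ antidiagonal n, C p.1 * coeff (R := R) p.2 (∏ k ∈ Icc 1 p.2,
              expPS (moebiusAdams ψ k r • logOnePlus (substPow k F - 1))) := by
        apply Finset.sum_congr rfl
        rintro ⟨i, j⟩ hmem
        rw [HasAntidiagonal.mem_antidiagonal] at hmem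
        have hij : i + j = n := by simpa using hmem
        rcases Nat.eq_zero_or_pos i with rfl | hi
        · rw [hC0, zero_mul, zero_mul]
        · rw [IH j (by omega)]
      have h4 : (n : R) * coeff (R := R) n (∏ k ∈ Icc 1 n, substPow k (σ (a k • r)))
          = (n : R) * coeff (R := R) n (∏ k ∈ Icc 1 n,
              expPS (moebiusAdams ψ k r • logOnePlus (substPow k F - 1))) := by
        rw [h1, h2, h3]
      have hn0 : (n : ℚ) ≠ 0 := by
        have := hn.ne'
        exact_mod_cast this
      have h5 : (n : ℚ) • coeff (R := R) n (∏ k ∈ Icc 1 n, substPow k (σ (a k • r)))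
          = (n : ℚ) • coeff (R := R) n (∏ k ∈ Icc 1 n,
              expPS (moebiusAdams ψ k r • logOnePlus (substPow k F - 1))) := by
        rw [Nat.cast_smul_eq_nsmul ℚ, Nat.cast_smul_eq_nsmul ℚ, nsmul_eq_mul, nsmul_eq_mul]
        exact h4
      have h6 := congrArg (fun x => (n : ℚ)⁻¹ • x) h5
      simpa [smul_smul, inv_mul_cancel₀ hn0] using h6
end
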